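/- arXiv:physics/0412157 — 5 statements merged into one kernel-verified Lean document; each statement's English description precedes it below -/
import Mathlib

section
/- Let A : ℝ → ℝ^{3×3} be a C¹ map, 2π-periodic, whose values are skew-symmetric matrices, and let Φ : ℝ → ℝ^{3×3} be the unique solution of the initial value problem Φ'(θ) = A(θ)Φ(θ), Φ(0) = I. Then there exist ν̂ ∈ [0,1), a matrix Ŵ ∈ SO(3), and a C¹, 2π-periodic map p̂ : ℝ → SO(3) with p̂(0) = I such that Φ(θ) = p̂(θ) Ŵ exp(𝒥 ν̂ θ) Ŵᵀ for all θ ∈ ℝ; moreover the set of complex eigenvalues of Φ(2π) is {e^{2πiν̂}, e^{−2πiν̂}, 1}. -/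
open MeasureTheory Filter
noncomputable section

/-- The matrix 𝒥: (2,1)-entry 1, (1,2)-entry −1, all other entries 0. -/
def Jmat : Matrix (Fin 3) (Fin 3) ℝ := Matrix.of ![![0, -1, 0], ![1, 0, 0], ![0, 0, 0]]

/-- The special orthogonal group SO(3): RᵀR = I and det R = 1. -/
def SO3 : Set (Matrix (Fin 3) (Fin 3) ℝ) := {R | R.transpose * R = 1 ∧ R.det = 1}

/-- 2π-periodicity in each of the k arguments. -/
def Periodic2Pi {k : ℕ} {E : Type*} (F : (Fin k → ℝ) → E) : Prop :=
  ∀ (z : Fin k → ℝ) (i : Fin k), F (Function.update z i (z i + 2 * Real.pi)) = F z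

/-- `f : ℝ → E` is quasiperiodic with tune vector `ν ∈ ℝ^k` if `f θ = F (νθ)` for a
continuous `F` that is 2π-periodic in each argument. -/
def IsQuasiperiodic {E : Type*} [TopologicalSpace E] {k : ℕ} (ν : Fin k → ℝ) (f : ℝ → E) : Prop :=
  ∃ F : (Fin k → ℝ) → E, Continuous F ∧ Periodic2Pi F ∧ ∀ θ : ℝ, f θ = F fun i => ν i * θ

/-- integer dot product `m · v` -/
def zdot {k : ℕ} (m : Fin k → ℤ) (v : Fin k → ℝ) : ℝ := ∑ i, (m i : ℝ) * v i

/-- `ν` is nonresonant if `m · ν = 0` only for `m = 0`. -/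
def Nonresonant {k : ℕ} (ν : Fin k → ℝ) : Prop :=
  ∀ m : Fin k → ℤ, zdot m ν = 0 → m = 0

/-- Fourier coefficient `F_m = (2π)^{-k} ∫_{[0,2π]^k} F(z) e^{-i m·z} dz`. -/
def mFourierCoeff {k : ℕ} (F : (Fin k → ℝ) → ℂ) (m : Fin k → ℤ) : ℂ :=
  ((2 * Real.pi) ^ k : ℝ)⁻¹ •
    ∫ z in Set.Icc (0 : Fin k → ℝ) (fun _ => 2 * Real.pi),
      F z * Complex.exp (-Complex.I * ∑ i, (m i : ℝ) * z i)

/-- The phase space `ℝ × ℝ^d` of pairs `(θ, φ)`. -/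
abbrev Pt (d : ℕ) := ℝ × (Fin d → ℝ)

/-- The vector `(1, ω) ∈ ℝ^{d+1}`. -/
def oneOmega {d : ℕ} (ω : Fin d → ℝ) : Fin (d + 1) → ℝ := Fin.cons 1 ω

/-- max norm `‖m‖ = max_i |m_i|` of an integer vector. -/
def intNorm {k : ℕ} (m : Fin k → ℤ) : ℕ := Finset.univ.sup fun i => (m i).natAbs

/-- The Diophantine set `Ω(τ) = ⋃_{γ ∈ (0,1]} Ω(τ,γ)` where
`Ω(τ,γ) = {ω : |m·(1,ω)| ≥ γ‖m‖^{-τ} for all nonzero m ∈ ℤ^{d+1}}`. -/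
def DiophSet (d : ℕ) (τ : ℝ) : Set (Fin d → ℝ) :=
  ⋃ γ ∈ Set.Ioc (0 : ℝ) 1,
    {ω | ∀ m : Fin (d + 1) → ℤ, m ≠ 0 → γ * (intNorm m : ℝ) ^ (-τ) ≤ |zdot m (oneOmega ω)|}

/-- The derivation 𝒟 applied to the entries of a matrix-valued function:
`(𝒟V)(p) = ∂_θ V + ω·∇_φ V`, i.e. the directional derivative along `(1, ω)`. -/
def Dmat {d : ℕ} (ω : Fin d → ℝ) (V : Pt d → Matrix (Fin 3) (Fin 3) ℝ) (p : Pt d) :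
    Matrix (Fin 3) (Fin 3) ℝ :=
  Matrix.of fun i j => fderiv ℝ (fun q => V q i j) p (1, ω)

/-- Periodicity: 2π-periodic in θ and in each component of φ. -/
def PeriodicPt {d : ℕ} {E : Type*} (f : Pt d → E) : Prop :=
  (∀ p : Pt d, f (p.1 + 2 * Real.pi, p.2) = f p) ∧
  (∀ (p : Pt d) (i : Fin d), f (p.1, Function.update p.2 i (p.2 i + 2 * Real.pi)) = f p)

/-- A matrix-valued map on `ℝ × ℝ^d` is of class `C^n` (entrywise). -/
def SmoothMat {d : ℕ} (n : ℕ∞) (V : Pt d → Matrix (Fin 3) (Fin 3) ℝ) : Prop :=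
  ∀ i j, ContDiff ℝ n fun p => V p i j

/-- `Φ` is the principal solution matrix at `φ₀`:
`∂_θ Φ(θ) = 𝒜(θ, ωθ + φ₀) Φ(θ)`, `Φ(0) = I`. -/
def IsPrincipalSolution {d : ℕ} (ω : Fin d → ℝ) (𝒜 : Pt d → Matrix (Fin 3) (Fin 3) ℝ)
    (φ₀ : Fin d → ℝ) (Φ : ℝ → Matrix (Fin 3) (Fin 3) ℝ) : Prop :=
  Φ 0 = 1 ∧ ∀ (θ : ℝ) (i j : Fin 3),
    HasDerivAt (fun t => Φ t i j) ((𝒜 (θ, fun l => ω l * θ + φ₀ l) * Φ θ) i j) θ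

/-- A uniform invariant frame field: C¹, 2π-periodic, SO(3)-valued, satisfying
`𝒟𝒱 = 𝒜𝒱 − ν𝒱𝒥` for a constant `ν ∈ [0,1)`. -/
def IsUniformIFF {d : ℕ} (ω : Fin d → ℝ) (𝒜 V : Pt d → Matrix (Fin 3) (Fin 3) ℝ) (ν : ℝ) :
    Prop :=
  SmoothMat 1 V ∧ PeriodicPt V ∧ (∀ p, V p ∈ SO3) ∧ ν ∈ Set.Ico (0 : ℝ) 1 ∧
  ∀ p, Dmat ω V p = 𝒜 p * V p - ν • (V p * Jmat)

/-- An invariant frame field: C¹, 2π-periodic, SO(3)-valued, whose third column 𝔳³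
satisfies `𝒟𝔳³ = 𝒜𝔳³`. -/
def IsIFF {d : ℕ} (ω : Fin d → ℝ) (𝒜 V : Pt d → Matrix (Fin 3) (Fin 3) ℝ) : Prop :=
  SmoothMat 1 V ∧ PeriodicPt V ∧ (∀ p, V p ∈ SO3) ∧
  ∀ (p : Pt d) (i : Fin 3),
    fderiv ℝ (fun q => V q i 2) p (1, ω) = ((𝒜 p).mulVec fun j => V p j 2) i

/-- An invariant spin field: C¹, 2π-periodic, unit length, satisfying `𝒟n = 𝒜n`. -/
def IsISF {d : ℕ} (ω : Fin d → ℝ) (𝒜 : Pt d → Matrix (Fin 3) (Fin 3) ℝ)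
    (n : Pt d → Fin 3 → ℝ) : Prop :=
  (∀ i, ContDiff ℝ 1 fun p => n p i) ∧ PeriodicPt n ∧ (∀ p, ∑ i, n p i ^ 2 = 1) ∧
  ∀ (p : Pt d) (i : Fin 3), fderiv ℝ (fun q => n q i) p (1, ω) = ((𝒜 p).mulVec (n p)) i

/-- cross product on ℝ³ -/
def cross3 (u v : Fin 3 → ℝ) : Fin 3 → ℝ :=
  ![u 1 * v 2 - u 2 * v 1, u 2 * v 0 - u 0 * v 2, u 0 * v 1 - u 1 * v 0]

/-- Euclidean norm on ℝ³ -/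
def nrm3 (v : Fin 3 → ℝ) : ℝ := Real.sqrt (∑ i, v i ^ 2)

/-- normalization of a vector in ℝ³ -/
def unitize (v : Fin 3 → ℝ) : Fin 3 → ℝ := fun i => v i / nrm3 v

/-- the matrix with columns a, b, c -/
def colMat (a b c : Fin 3 → ℝ) : Matrix (Fin 3) (Fin 3) ℝ := (Matrix.of ![a, b, c]).transpose

namespace FloquetAux
open Matrix

def Rot (s : ℝ) : Matrix (Fin 3) (Fin 3) ℝ :=
  Matrix.of ![![Real.cos s, -Real.sin s, 0], ![Real.sin s, Real.cos s, 0], ![0, 0, 1]]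
lemma Jmat_transpose : Jmatᵀ = -Jmat := by
  ext i j
  fin_cases i <;> fin_cases j <;> simp [Jmat, Matrix.vecHead, Matrix.vecTail]


/-- entrywise derivative of the matrix exponential of `t • Jmat` -/
lemma hasDerivAt_expJ (s : ℝ) (i j : Fin 3) :
    HasDerivAt (fun t : ℝ => NormedSpace.exp (t • Jmat) i j)
      ((Jmat * NormedSpace.exp (s • Jmat)) i j) s := by
  letI : SeminormedRing (Matrix (Fin 3) (Fin 3) ℝ) := Matrix.linftyOpSemiNormedRing
  letI : NormedRing (Matrix (Fin 3) (Fin 3) ℝ) := Matrix.linftyOpNormedRing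
  letI : NormedAlgebra ℝ (Matrix (Fin 3) (Fin 3) ℝ) := Matrix.linftyOpNormedAlgebra
  have h := hasDerivAt_exp_smul_const' (𝕂 := ℝ) Jmat s
  let l : Matrix (Fin 3) (Fin 3) ℝ →ₗ[ℝ] ℝ :=
    (LinearMap.proj j).comp (LinearMap.proj (R := ℝ) (φ := fun _ : Fin 3 => Fin 3 → ℝ) i)
  have hl := (l.toContinuousLinearMap.hasFDerivAt
    (x := NormedSpace.exp (s • Jmat))).comp_hasDerivAt s h
  exact hl

lemma hasDerivAt_matmul {f g : ℝ → Matrix (Fin 3) (Fin 3) ℝ}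
    {f' g' : Matrix (Fin 3) (Fin 3) ℝ} {θ : ℝ}
    (hf : ∀ i j, HasDerivAt (fun t => f t i j) (f' i j) θ)
    (hg : ∀ i j, HasDerivAt (fun t => g t i j) (g' i j) θ) (i j : Fin 3) :
    HasDerivAt (fun t => (f t * g t) i j) ((f' * g θ + f θ * g') i j) θ := by
  have h := HasDerivAt.fun_sum (u := Finset.univ) (fun k _ => (hf i k).mul (hg k j))
  simpa [Matrix.mul_apply, Matrix.add_apply, Finset.sum_add_distrib] using h


lemma matrix_const_of_hasDerivAt_zero {f : ℝ → Matrix (Fin 3) (Fin 3) ℝ}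
    (hf : ∀ (θ : ℝ) (i j : Fin 3), HasDerivAt (fun t => f t i j) 0 θ) (θ : ℝ) :
    f θ = f 0 := by
  ext i j
  exact is_const_of_deriv_eq_zero (fun x => (hf x i j).differentiableAt)
    (fun x => (hf x i j).deriv) θ 0


lemma hasDerivAt_Rot (s : ℝ) (i j : Fin 3) :
    HasDerivAt (fun t => Rot t i j) ((Jmat * Rot s) i j) s := by
  fin_cases i <;> fin_cases j <;>
    · simp only [Rot, Jmat, Matrix.mul_apply, Fin.sum_univ_three, Matrix.of_apply,
        Matrix.cons_val', Matrix.cons_val_zero, Matrix.cons_val_one, Matrix.head_cons,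
        Matrix.empty_val', Matrix.cons_val_fin_one, Matrix.head_fin_const,
        Matrix.cons_val_two, Matrix.tail_cons]
      norm_num
      first
        | exact hasDerivAt_const _ _
        | exact (Real.hasDerivAt_sin s).neg
        | exact Real.hasDerivAt_sin s
        | exact Real.hasDerivAt_cos s


lemma Rot_mul (a b : ℝ) : Rot a * Rot b = Rot (a + b) := by
  ext i j
  fin_cases i <;> fin_cases j <;>
    simp [Rot, Matrix.mul_apply, Fin.sum_univ_three, Real.cos_add, Real.sin_add] <;> ring


lemma Rot_zero : Rot 0 = 1 := by
  ext i j
  fin_cases i <;> fin_cases j <;>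
    simp [Rot, Matrix.one_apply, Matrix.vecHead, Matrix.vecTail]


lemma Rot_transpose (s : ℝ) : (Rot s)ᵀ = Rot (-s) := by
  ext i j
  fin_cases i <;> fin_cases j <;>
    simp [Rot, Matrix.transpose_apply, Matrix.vecHead, Matrix.vecTail]


lemma exp_smul_J (s : ℝ) : NormedSpace.exp (s • Jmat) = Rot s := by
  have key : ∀ θ : ℝ, (Rot θ)ᵀ * NormedSpace.exp (θ • Jmat) = 1 := by
    intro θ
    have hconst : ∀ (t : ℝ) (i j : Fin 3),
        HasDerivAt (fun u => ((Rot u)ᵀ * NormedSpace.exp (u • Jmat)) i j) 0 t := by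
      intro t i j
      have hf : ∀ i j : Fin 3, HasDerivAt (fun u => (Rot u)ᵀ i j) ((Jmat * Rot t)ᵀ i j) t := by
        intro i j
        simpa [Matrix.transpose_apply] using hasDerivAt_Rot t j i
      have h := hasDerivAt_matmul hf (hasDerivAt_expJ t) i j
      have hzero : (Jmat * Rot t)ᵀ * NormedSpace.exp (t • Jmat) +
          (Rot t)ᵀ * (Jmat * NormedSpace.exp (t • Jmat)) = 0 := by
        rw [Matrix.transpose_mul, Jmat_transpose]
        simp only [Matrix.neg_mul, Matrix.mul_neg, Matrix.mul_assoc]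
        exact neg_add_cancel _
      rw [hzero] at h
      simpa using h
    have := matrix_const_of_hasDerivAt_zero hconst θ
    rw [this, Rot_zero, Matrix.transpose_one, Matrix.one_mul, zero_smul,
      NormedSpace.exp_zero]
  have h2 : Rot s * ((Rot s)ᵀ * NormedSpace.exp (s • Jmat)) = Rot s := by
    rw [key, Matrix.mul_one]
  rw [← Matrix.mul_assoc, Rot_transpose, Rot_mul] at h2
  simpa [Rot_zero] using h2


lemma Rot_inv (s : ℝ) : Rot s * Rot (-s) = 1 := by
  rw [Rot_mul]; simp [Rot_zero]


lemma Rot_SO3 (s : ℝ) : Rot s ∈ SO3 := by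
  constructor
  · rw [Rot_transpose, Rot_mul]; simp [Rot_zero]
  · simp [Rot, Matrix.det_fin_three, Matrix.vecHead, Matrix.vecTail]
    nlinarith [Real.sin_sq_add_cos_sq s]


lemma SO3_one : (1 : Matrix (Fin 3) (Fin 3) ℝ) ∈ SO3 := by constructor <;> simp


lemma SO3_mul {A B : Matrix (Fin 3) (Fin 3) ℝ} (hA : A ∈ SO3) (hB : B ∈ SO3) :
    A * B ∈ SO3 := by
  obtain ⟨hA1, hA2⟩ := hA; obtain ⟨hB1, hB2⟩ := hB
  refine ⟨?_, by rw [Matrix.det_mul, hA2, hB2, one_mul]⟩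
  rw [Matrix.transpose_mul]
  calc Bᵀ * Aᵀ * (A * B) = Bᵀ * (Aᵀ * A) * B := by
        rw [Matrix.mul_assoc, Matrix.mul_assoc, Matrix.mul_assoc]
    _ = 1 := by rw [hA1, Matrix.mul_one]; exact hB1

lemma SO3_mul_transpose_self {A : Matrix (Fin 3) (Fin 3) ℝ} (hA : A ∈ SO3) :
    A * Aᵀ = 1 := mul_eq_one_comm.mp hA.1





lemma SO3_transpose {A : Matrix (Fin 3) (Fin 3) ℝ} (hA : A ∈ SO3) : Aᵀ ∈ SO3 := by
  refine ⟨?_, by rw [Matrix.det_transpose]; exact hA.2⟩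
  rw [Matrix.transpose_transpose]; exact SO3_mul_transpose_self hA



lemma det_sub_one_eq_zero {R : Matrix (Fin 3) (Fin 3) ℝ} (hR : R ∈ SO3) :
    (R - 1).det = 0 := by
  have h1 : (R - 1)ᵀ = Rᵀ * (1 - R) := by
    rw [Matrix.mul_sub, Matrix.mul_one, hR.1, Matrix.transpose_sub, Matrix.transpose_one]
  have h2 : (R - 1).det = (R - 1)ᵀ.det := (Matrix.det_transpose _).symm
  have h3 : (1 - R : Matrix (Fin 3) (Fin 3) ℝ) = -(R - 1) := by rw [neg_sub]
  have hdetRT : (Rᵀ).det = 1 := by rw [Matrix.det_transpose]; exact hR.2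
  rw [h1, Matrix.det_mul, hdetRT, one_mul, h3, Matrix.det_neg] at h2
  simp only [Fintype.card_fin] at h2
  norm_num at h2
  linarith


lemma exists_fixed_vector {R : Matrix (Fin 3) (Fin 3) ℝ} (hR : R ∈ SO3) :
    ∃ v : Fin 3 → ℝ, v ≠ 0 ∧ R.mulVec v = v := by
  obtain ⟨v, hv0, hv⟩ := (Matrix.exists_mulVec_eq_zero_iff).mpr (det_sub_one_eq_zero hR)
  refine ⟨v, hv0, ?_⟩
  have := hv
  rwa [Matrix.sub_mulVec, Matrix.one_mulVec, sub_eq_zero] at this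


/-- a unit vector is the third column of some special orthogonal matrix -/
lemma exists_SO3_col {u : EuclideanSpace ℝ (Fin 3)} (hu : ‖u‖ = 1) :
    ∃ W ∈ SO3, ∀ i, W i 2 = u i := by
  classical
  have card_eq : Module.finrank ℝ (EuclideanSpace ℝ (Fin 3)) = Fintype.card (Fin 3) :=
    finrank_euclideanSpace
  set s : Set (Fin 3) := {2} with hs
  have hOrth : Orthonormal ℝ (s.restrict fun _ : Fin 3 => u) := by
    constructor
    · rintro ⟨i, hi⟩; exact hu
    · rintro ⟨i, hi⟩ ⟨j, hj⟩ hij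
      exact absurd (Subtype.ext ((Set.mem_singleton_iff.mp hi).trans
        (Set.mem_singleton_iff.mp hj).symm)) hij
  obtain ⟨b, hb⟩ := hOrth.exists_orthonormalBasis_extension_of_card_eq card_eq
  have hb2 : b 2 = u := hb 2 rfl
  set W₀ : Matrix (Fin 3) (Fin 3) ℝ := Matrix.of fun i j => b j i with hW₀def
  have hW₀ : W₀ᵀ * W₀ = 1 := by
    ext i j
    have h := orthonormal_iff_ite.mp b.orthonormal i j
    rw [PiLp.inner_apply] at h
    simp only [RCLike.inner_apply, conj_trivial] at h
    simp only [Matrix.mul_apply, Matrix.transpose_apply, Matrix.one_apply, hW₀def,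
      Matrix.of_apply]
    convert h using 2
    exact mul_comm _ _
  have hdetsq : W₀.det * W₀.det = 1 := by
    have := congrArg Matrix.det hW₀
    rwa [Matrix.det_mul, Matrix.det_transpose, Matrix.det_one] at this
  set d : Fin 3 → ℝ := ![W₀.det, 1, 1] with hd
  set W : Matrix (Fin 3) (Fin 3) ℝ := W₀ * Matrix.diagonal d with hWdef
  have hdd : ∀ i, d i * d i = 1 := by
    intro i; fin_cases i <;> simp [hd, hdetsq]
  have hWt : Wᵀ * W = 1 := by
    rw [hWdef, Matrix.transpose_mul, Matrix.diagonal_transpose, Matrix.mul_assoc,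
      ← Matrix.mul_assoc W₀ᵀ, hW₀, Matrix.one_mul, Matrix.diagonal_mul_diagonal]
    ext i j
    by_cases hij : i = j
    · subst hij; simp [Matrix.diagonal_apply_eq, hdd i]
    · simp [Matrix.diagonal_apply_ne _ hij, Matrix.one_apply_ne hij]
  have hWdet : W.det = 1 := by
    rw [hWdef, Matrix.det_mul, Matrix.det_diagonal, hd]
    simp [Fin.prod_univ_three, hdetsq]
  refine ⟨W, ⟨hWt, hWdet⟩, fun i => ?_⟩
  rw [hWdef, Matrix.mul_diagonal]
  have : d 2 = 1 := by simp [hd]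
  rw [this, mul_one, hW₀def]
  simp [hb2]


set_option maxHeartbeats 2000000 in
/-- Euler's rotation theorem -/
lemma euler_rotation {R : Matrix (Fin 3) (Fin 3) ℝ} (hR : R ∈ SO3) :
    ∃ ν ∈ Set.Ico (0 : ℝ) 1, ∃ W ∈ SO3, R = W * Rot (2 * Real.pi * ν) * Wᵀ := by
  classical
  obtain ⟨v, hv0, hv⟩ := exists_fixed_vector hR
  -- normalize
  set vE : EuclideanSpace ℝ (Fin 3) := WithLp.toLp 2 v with hvE
  have hvE0 : vE ≠ 0 := fun h => hv0 (by have := congrArg WithLp.ofLp h; simpa [hvE] using this)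
  have hnv : ‖vE‖ ≠ 0 := norm_ne_zero_iff.mpr hvE0
  set u : EuclideanSpace ℝ (Fin 3) := ‖vE‖⁻¹ • vE with hu_def
  have hu : ‖u‖ = 1 := by
    rw [hu_def, norm_smul, norm_inv, norm_norm, inv_mul_cancel₀ hnv]
  have hui : ∀ i, u i = ‖vE‖⁻¹ * v i := fun i => rfl
  have hRu : R.mulVec (fun i => u i) = fun i => u i := by
    funext i
    simp only [Matrix.mulVec, dotProduct, hui, Finset.mul_sum]
    have := congrFun hv i
    simp only [Matrix.mulVec, dotProduct] at this
    calc ∑ j, R i j * (‖vE‖⁻¹ * v j) = ‖vE‖⁻¹ * ∑ j, R i j * v j := by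
          rw [Finset.mul_sum]; congr 1; funext j; ring
      _ = ‖vE‖⁻¹ * v i := by rw [this]
  obtain ⟨W, hW, hWcol⟩ := exists_SO3_col hu
  have hWWt : W * Wᵀ = 1 := SO3_mul_transpose_self hW
  set M : Matrix (Fin 3) (Fin 3) ℝ := Wᵀ * R * W with hMdef
  have hM : M ∈ SO3 := by
    refine ⟨?_, ?_⟩
    · rw [hMdef]
      simp only [Matrix.transpose_mul, Matrix.transpose_transpose]
      calc Wᵀ * (Rᵀ * W) * (Wᵀ * R * W) = Wᵀ * Rᵀ * (W * Wᵀ) * R * W := by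
            simp only [Matrix.mul_assoc]
        _ = Wᵀ * (Rᵀ * R) * W := by rw [hWWt]; simp only [Matrix.mul_assoc, Matrix.one_mul]
        _ = 1 := by rw [hR.1, Matrix.mul_one, hW.1]
    · rw [hMdef, Matrix.det_mul, Matrix.det_mul, Matrix.det_transpose, hR.2, hW.2]
      ring
  -- third column and row of M
  have hRWcol : ∀ k, (R * W) k 2 = u k := by
    intro k
    rw [Matrix.mul_apply]
    have := congrFun hRu k
    simp only [Matrix.mulVec, dotProduct] at this
    calc ∑ l, R k l * W l 2 = ∑ l, R k l * u l := by
          congr 1; funext l; rw [hWcol l]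
      _ = u k := this
  have hMc : ∀ i, M i 2 = (1 : Matrix (Fin 3) (Fin 3) ℝ) i 2 := by
    intro i
    rw [hMdef, Matrix.mul_assoc, Matrix.mul_apply]
    have : ∑ k, Wᵀ i k * (R * W) k 2 = ∑ k, W k i * W k 2 := by
      congr 1; funext k; rw [Matrix.transpose_apply, hRWcol k, hWcol k]
    rw [this]
    have h1 := congrFun (congrFun hW.1 i) 2
    rw [Matrix.mul_apply] at h1
    simp only [Matrix.transpose_apply] at h1
    exact h1
  have hRtu : Rᵀ.mulVec (fun i => u i) = fun i => u i := by
    have h1 : Rᵀ.mulVec (R.mulVec fun i => u i) = (Rᵀ * R).mulVec (fun i => u i) := by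
      rw [Matrix.mulVec_mulVec]
    rw [hRu, hR.1, Matrix.one_mulVec] at h1
    exact h1
  have hWtR : ∀ k, (Wᵀ * R) 2 k = u k := by
    intro k
    rw [Matrix.mul_apply]
    have := congrFun hRtu k
    simp only [Matrix.mulVec, dotProduct] at this
    calc ∑ l, Wᵀ 2 l * R l k = ∑ l, Rᵀ k l * u l := by
          congr 1; funext l
          rw [Matrix.transpose_apply, Matrix.transpose_apply, hWcol l]; ring
      _ = u k := this
  have hMr : ∀ j, M 2 j = (1 : Matrix (Fin 3) (Fin 3) ℝ) 2 j := by
    intro j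
    rw [hMdef, Matrix.mul_apply]
    have : ∑ k, (Wᵀ * R) 2 k * W k j = ∑ k, W k 2 * W k j := by
      congr 1; funext k; rw [hWtR k, hWcol k]
    rw [this]
    have h1 := congrFun (congrFun hW.1 2) j
    rw [Matrix.mul_apply] at h1
    simp only [Matrix.transpose_apply] at h1
    exact h1
  -- extract the 2x2 block
  set a := M 0 0 with ha
  set bb := M 0 1 with hbb
  set c := M 1 0 with hc
  set dd := M 1 1 with hdd2
  have hM20 : M 2 0 = 0 := by rw [hMr 0]; simp [Matrix.one_apply]
  have hM21 : M 2 1 = 0 := by rw [hMr 1]; simp [Matrix.one_apply]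
  have hM02 : M 0 2 = 0 := by rw [hMc 0]; simp [Matrix.one_apply]
  have hM12 : M 1 2 = 0 := by rw [hMc 1]; simp [Matrix.one_apply]
  have hM22 : M 2 2 = 1 := by rw [hMc 2]; simp [Matrix.one_apply]
  have h00 : a ^ 2 + c ^ 2 = 1 := by
    have h1 := congrFun (congrFun hM.1 0) 0
    rw [Matrix.mul_apply, Fin.sum_univ_three] at h1
    simp only [Matrix.transpose_apply, Matrix.one_apply_eq, hM20] at h1
    rw [← ha, ← hc] at h1
    nlinarith [h1]
  have h01 : a * bb + c * dd = 0 := by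
    have h1 := congrFun (congrFun hM.1 0) 1
    rw [Matrix.mul_apply, Fin.sum_univ_three] at h1
    simp only [Matrix.transpose_apply, hM20, hM21] at h1
    rw [Matrix.one_apply_ne (by decide)] at h1
    rw [← ha, ← hbb, ← hc, ← hdd2] at h1
    nlinarith [h1]
  have h11 : bb ^ 2 + dd ^ 2 = 1 := by
    have h1 := congrFun (congrFun hM.1 1) 1
    rw [Matrix.mul_apply, Fin.sum_univ_three] at h1
    simp only [Matrix.transpose_apply, Matrix.one_apply_eq, hM21] at h1
    rw [← hbb, ← hdd2] at h1
    nlinarith [h1]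
  have hdet : a * dd - bb * c = 1 := by
    have h1 := hM.2
    rw [Matrix.det_fin_three, hM20, hM21, hM02, hM12, hM22] at h1
    rw [← ha, ← hbb, ← hc, ← hdd2] at h1
    nlinarith [h1]
  have hd_eq : dd = a := by linear_combination a * hdet + c * h01 - dd * h00
  have hb_eq : bb = -c := by linear_combination dd * h01 - c * h11 - bb * hdet
  -- the angle
  have ham1 : -1 ≤ a := by nlinarith
  have ha1 : a ≤ 1 := by nlinarith
  set α : ℝ := if 0 ≤ c then Real.arccos a else 2 * Real.pi - Real.arccos a with hα
  have hcos : Real.cos α = a := by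
    rw [hα]; split_ifs
    · exact Real.cos_arccos ham1 ha1
    · rw [Real.cos_sub, Real.cos_two_pi, Real.sin_two_pi, Real.cos_arccos ham1 ha1]; ring
  have hsqrt : Real.sqrt (1 - a ^ 2) = |c| := by
    rw [show (1 : ℝ) - a ^ 2 = c ^ 2 by linarith, Real.sqrt_sq_eq_abs]
  have hsin : Real.sin α = c := by
    rw [hα]; split_ifs with h
    · rw [Real.sin_arccos, hsqrt, abs_of_nonneg h]
    · rw [Real.sin_sub, Real.cos_two_pi, Real.sin_two_pi, Real.sin_arccos, hsqrt,
        abs_of_neg (not_le.mp h)]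
      ring
  have hα0 : 0 ≤ α := by
    rw [hα]; split_ifs
    · exact Real.arccos_nonneg a
    · have := Real.arccos_le_pi a
      nlinarith [Real.pi_pos]
  have hα2π : α < 2 * Real.pi := by
    rw [hα]; split_ifs with h
    · have := Real.arccos_le_pi a
      nlinarith [Real.pi_pos]
    · have hlt : a < 1 := by
        rcases lt_or_eq_of_le ha1 with h' | h'
        · exact h'
        · exfalso
          have : c ^ 2 = 0 := by nlinarith
          have : c = 0 := by nlinarith
          exact (not_le.mp h).ne this
      have := Real.arccos_pos.mpr hlt
      linarith
  -- conclude
  set ν : ℝ := α / (2 * Real.pi) with hν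
  have hπ : (0:ℝ) < 2 * Real.pi := by positivity
  have hνIco : ν ∈ Set.Ico (0:ℝ) 1 := by
    constructor
    · exact div_nonneg hα0 (le_of_lt hπ)
    · rw [div_lt_one hπ]; exact hα2π
  have hαν : 2 * Real.pi * ν = α := by
    rw [hν]; field_simp
  have hMeta : M = Matrix.of ![![a, bb, 0], ![c, dd, 0], ![0, 0, 1]] := by
    rw [Matrix.eta_fin_three M, hM02, hM12, hM20, hM21, hM22, ← ha, ← hbb, ← hc, ← hdd2]
  have hMRot : M = Rot α := by
    rw [hMeta, Rot, hb_eq, hd_eq, ← hcos, ← hsin]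
  refine ⟨ν, hνIco, W, hW, ?_⟩
  rw [hαν, ← hMRot, hMdef]
  calc R = (W * Wᵀ) * R * (W * Wᵀ) := by rw [hWWt, Matrix.one_mul, Matrix.mul_one]
    _ = W * (Wᵀ * R * W) * Wᵀ := by simp only [Matrix.mul_assoc]



lemma spectrum_conj_rot (α : ℝ) {W : Matrix (Fin 3) (Fin 3) ℝ} (hW : W ∈ SO3) :
    spectrum ℂ ((W * Rot α * Wᵀ).map (fun x : ℝ => (x : ℂ))) =
      {Complex.exp ((α : ℂ) * Complex.I), Complex.exp (-((α : ℂ) * Complex.I)), 1} := by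
  classical
  have hmapfun : (fun x : ℝ => (x : ℂ)) = ⇑Complex.ofRealHom := rfl
  set Wc := W.map (fun x : ℝ => (x : ℂ)) with hWc
  set Rc := (Rot α).map (fun x : ℝ => (x : ℂ)) with hRc
  have hmap : (W * Rot α * Wᵀ).map (fun x : ℝ => (x : ℂ)) = Wc * Rc * Wᵀ.map (fun x : ℝ => (x : ℂ)) := by
    rw [hmapfun, Matrix.map_mul, Matrix.map_mul]
    rfl
  have hWct : Wᵀ.map (fun x : ℝ => (x : ℂ)) = Wcᵀ := by
    ext i j
    simp [hWc, Matrix.transpose_apply, Matrix.map_apply]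
  have hWcWct : Wc * Wcᵀ = 1 := by
    have h2 : (W * Wᵀ).map (fun x : ℝ => (x : ℂ))
        = (1 : Matrix (Fin 3) (Fin 3) ℝ).map (fun x : ℝ => (x : ℂ)) := by
      rw [SO3_mul_transpose_self hW]
    rw [hmapfun, Matrix.map_mul, Matrix.map_one _ (by simp) (by simp)] at h2
    rw [hWc, ← Matrix.transpose_map]
    exact h2
  set e₁ := Complex.exp ((α : ℂ) * Complex.I) with he₁
  set e₂ := Complex.exp (-((α : ℂ) * Complex.I)) with he₂
  have he₁' : e₁ = Complex.cos α + Complex.sin α * Complex.I := by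
    rw [he₁, Complex.exp_mul_I]
  have he₂' : e₂ = Complex.cos α - Complex.sin α * Complex.I := by
    rw [he₂, ← neg_mul, Complex.exp_mul_I, Complex.cos_neg, Complex.sin_neg]
    ring
  ext z
  rw [spectrum.mem_iff, Algebra.algebraMap_eq_smul_one, Matrix.isUnit_iff_isUnit_det,
    isUnit_iff_ne_zero, not_not, hmap, hWct]
  have hconj : z • (1 : Matrix (Fin 3) (Fin 3) ℂ) - Wc * Rc * Wcᵀ
      = Wc * (z • 1 - Rc) * Wcᵀ := by
    rw [Matrix.mul_sub, Matrix.sub_mul]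
    congr 1
    rw [Matrix.mul_smul, Matrix.mul_one, Matrix.smul_mul, hWcWct]
  rw [hconj, Matrix.det_mul, Matrix.det_mul]
  have hdet1 : Wc.det * Wcᵀ.det = 1 := by
    rw [← Matrix.det_mul, hWcWct, Matrix.det_one]
  have hkey : (z • (1 : Matrix (Fin 3) (Fin 3) ℂ) - Rc).det
      = (z - 1) * ((z - e₁) * (z - e₂)) := by
    rw [Matrix.det_fin_three]
    simp only [Matrix.sub_apply, Matrix.smul_apply, Matrix.one_apply, hRc,
      Matrix.map_apply, Rot, Matrix.of_apply, Matrix.cons_val_zero, Matrix.cons_val_one,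
      Matrix.head_cons, Matrix.cons_val_two, Matrix.tail_cons, Matrix.cons_val',
      Matrix.empty_val', Matrix.cons_val_fin_one, Matrix.head_fin_const, Fin.reduceEq,
      reduceIte, Complex.ofReal_cos, Complex.ofReal_sin, Complex.ofReal_zero,
      Complex.ofReal_one, Complex.ofReal_neg, smul_eq_mul, mul_one, mul_zero,
      Complex.I_sq]
    rw [he₁', he₂']
    have hpy := Complex.sin_sq_add_cos_sq (α : ℂ)
    ring_nf
    simp only [Complex.I_sq]
    ring_nf at hpy ⊢
    try linear_combination (z - 1) * hpy
  rw [hkey]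
  have : Wc.det * ((z - 1) * ((z - e₁) * (z - e₂))) * Wcᵀ.det
      = (z - 1) * ((z - e₁) * (z - e₂)) := by
    linear_combination ((z - 1) * ((z - e₁) * (z - e₂))) * hdet1
  rw [this]
  simp only [mul_eq_zero, sub_eq_zero, Set.mem_insert_iff, Set.mem_singleton_iff]
  constructor
  · rintro (h | h | h) <;> simp [h]
  · rintro (h | h | h) <;> simp [h]


end FloquetAux

open FloquetAux Matrix in
/-- Floquet theorem for spin motion on the closed orbit. -/
theorem floquet_closed_orbit
    (A : ℝ → Matrix (Fin 3) (Fin 3) ℝ)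
    (hAsmooth : ∀ i j, ContDiff ℝ 1 fun θ => A θ i j)
    (hAskew : ∀ θ, (A θ).transpose = -(A θ))
    (hAper : ∀ θ, A (θ + 2 * Real.pi) = A θ)
    (Φ : ℝ → Matrix (Fin 3) (Fin 3) ℝ)
    (hΦ0 : Φ 0 = 1)
    (hΦ : ∀ (θ : ℝ) (i j : Fin 3), HasDerivAt (fun t => Φ t i j) ((A θ * Φ θ) i j) θ) :
    ∃ ν ∈ Set.Ico (0 : ℝ) 1, ∃ W ∈ SO3, ∃ p : ℝ → Matrix (Fin 3) (Fin 3) ℝ,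
      (∀ i j, ContDiff ℝ 1 fun θ => p θ i j) ∧ (∀ θ, p θ ∈ SO3) ∧ p 0 = 1 ∧
      (∀ θ, p (θ + 2 * Real.pi) = p θ) ∧
      (∀ θ, Φ θ = p θ * W * NormedSpace.exp ((ν * θ) • Jmat) * W.transpose) ∧
      spectrum ℂ ((Φ (2 * Real.pi)).map (fun x : ℝ => (x : ℂ))) =
        {Complex.exp (2 * Real.pi * Complex.I * ν),
         Complex.exp (-(2 * Real.pi * Complex.I * ν)), 1} := by
  classical
  -- entry derivatives of the transpose
  have hΦT : ∀ (θ : ℝ) (i j : Fin 3),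
      HasDerivAt (fun t => (Φ t)ᵀ i j) ((A θ * Φ θ)ᵀ i j) θ := by
    intro θ i j
    simpa [Matrix.transpose_apply] using hΦ θ j i
  -- orthogonality of Φ
  have hortho : ∀ θ, (Φ θ)ᵀ * Φ θ = 1 := by
    intro θ
    have hconst : ∀ (t : ℝ) (i j : Fin 3),
        HasDerivAt (fun u => ((Φ u)ᵀ * Φ u) i j) 0 t := by
      intro t i j
      have h := hasDerivAt_matmul (hΦT t) (hΦ t) i j
      have hzero : (A t * Φ t)ᵀ * Φ t + (Φ t)ᵀ * (A t * Φ t) = 0 := by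
        rw [Matrix.transpose_mul, hAskew t]
        simp only [Matrix.mul_neg, Matrix.neg_mul, Matrix.mul_assoc]
        exact neg_add_cancel _
      rw [hzero] at h
      simpa using h
    have h := matrix_const_of_hasDerivAt_zero hconst θ
    rw [h, hΦ0]
    simp
  have hΦΦT : ∀ θ, Φ θ * (Φ θ)ᵀ = 1 := fun θ => mul_eq_one_comm.mp (hortho θ)
  -- entries of Φ are continuous
  have hΦdiff : ∀ i j, Differentiable ℝ fun t => Φ t i j :=
    fun i j t => (hΦ t i j).differentiableAt
  have hΦcont : ∀ i j, Continuous fun t => Φ t i j := fun i j => (hΦdiff i j).continuous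
  -- determinant
  have hdetsq : ∀ θ, (Φ θ).det * (Φ θ).det = 1 := by
    intro θ
    have := congrArg Matrix.det (hortho θ)
    rwa [Matrix.det_mul, Matrix.det_transpose, Matrix.det_one] at this
  have hdetcont : Continuous fun t => (Φ t).det := by
    have hrw : (fun t => (Φ t).det) = fun t =>
        Φ t 0 0 * Φ t 1 1 * Φ t 2 2 - Φ t 0 0 * Φ t 1 2 * Φ t 2 1 -
          Φ t 0 1 * Φ t 1 0 * Φ t 2 2 + Φ t 0 1 * Φ t 1 2 * Φ t 2 0 +
          Φ t 0 2 * Φ t 1 0 * Φ t 2 1 - Φ t 0 2 * Φ t 1 1 * Φ t 2 0 := by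
      funext t
      exact Matrix.det_fin_three (Φ t)
    rw [hrw]
    exact (((((((hΦcont 0 0).mul (hΦcont 1 1)).mul (hΦcont 2 2)).sub
      (((hΦcont 0 0).mul (hΦcont 1 2)).mul (hΦcont 2 1))).sub
      (((hΦcont 0 1).mul (hΦcont 1 0)).mul (hΦcont 2 2))).add
      (((hΦcont 0 1).mul (hΦcont 1 2)).mul (hΦcont 2 0))).add
      (((hΦcont 0 2).mul (hΦcont 1 0)).mul (hΦcont 2 1))).sub
      (((hΦcont 0 2).mul (hΦcont 1 1)).mul (hΦcont 2 0))
  have hdet1 : ∀ θ, (Φ θ).det = 1 := by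
    intro θ
    rcases mul_self_eq_one_iff.mp (hdetsq θ) with h | h
    · exact h
    · exfalso
      have h0 : (Φ (0:ℝ)).det = 1 := by rw [hΦ0, Matrix.det_one]
      have hmem : (0:ℝ) ∈ Set.uIcc ((Φ (0:ℝ)).det) ((Φ θ).det) := by
        rw [h0, h]
        exact Set.mem_uIcc.mpr (Or.inr ⟨by norm_num, by norm_num⟩)
      obtain ⟨s, _, hs⟩ := intermediate_value_uIcc (hdetcont.continuousOn) hmem
      have hs' : (Φ s).det = 0 := hs
      have := hdetsq s
      rw [hs'] at this
      norm_num at this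
  have hΦSO3 : ∀ θ, Φ θ ∈ SO3 := fun θ => ⟨hortho θ, hdet1 θ⟩
  -- Φ(θ + 2π) = Φ θ * Φ(2π)
  have hshift : ∀ (θ : ℝ) (i j : Fin 3),
      HasDerivAt (fun t => Φ (t + 2 * Real.pi) i j)
        ((A θ * Φ (θ + 2 * Real.pi)) i j) θ := by
    intro θ i j
    have h := (hΦ (θ + 2 * Real.pi) i j).comp θ ((hasDerivAt_id θ).add_const (2 * Real.pi))
    rw [hAper θ] at h
    simpa [Function.comp_def] using h
  have hper : ∀ θ, Φ (θ + 2 * Real.pi) = Φ θ * Φ (2 * Real.pi) := by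
    intro θ
    have hconst : ∀ (t : ℝ) (i j : Fin 3),
        HasDerivAt (fun u => ((Φ u)ᵀ * Φ (u + 2 * Real.pi)) i j) 0 t := by
      intro t i j
      have h := hasDerivAt_matmul (hΦT t) (hshift t) i j
      have hzero : (A t * Φ t)ᵀ * Φ (t + 2 * Real.pi) +
          (Φ t)ᵀ * (A t * Φ (t + 2 * Real.pi)) = 0 := by
        rw [Matrix.transpose_mul, hAskew t]
        simp only [Matrix.mul_neg, Matrix.neg_mul, Matrix.mul_assoc]
        exact neg_add_cancel _
      rw [hzero] at h
      simpa using h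
    have h := matrix_const_of_hasDerivAt_zero hconst θ
    rw [hΦ0] at h
    simp only [Matrix.transpose_one, Matrix.one_mul, zero_add] at h
    calc Φ (θ + 2 * Real.pi) = (Φ θ * (Φ θ)ᵀ) * Φ (θ + 2 * Real.pi) := by
          rw [hΦΦT, Matrix.one_mul]
      _ = Φ θ * ((Φ θ)ᵀ * Φ (θ + 2 * Real.pi)) := by rw [Matrix.mul_assoc]
      _ = Φ θ * Φ (2 * Real.pi) := by rw [h]
  -- Euler decomposition of the monodromy matrix
  obtain ⟨ν, hν, W, hW, hRW⟩ := euler_rotation (hΦSO3 (2 * Real.pi))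
  have hWWt : W * Wᵀ = 1 := SO3_mul_transpose_self hW
  have conj_mul : ∀ x y : ℝ,
      (W * Rot x * Wᵀ) * (W * Rot y * Wᵀ) = W * Rot (x + y) * Wᵀ := by
    intro x y
    calc (W * Rot x * Wᵀ) * (W * Rot y * Wᵀ)
        = W * Rot x * (Wᵀ * W) * Rot y * Wᵀ := by simp only [Matrix.mul_assoc]
      _ = W * (Rot x * Rot y) * Wᵀ := by
          rw [hW.1]
          simp only [Matrix.mul_assoc, Matrix.one_mul]
      _ = W * Rot (x + y) * Wᵀ := by rw [Rot_mul]
  set p : ℝ → Matrix (Fin 3) (Fin 3) ℝ :=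
    fun θ => Φ θ * (W * Rot (-ν * θ) * Wᵀ) with hpdef
  refine ⟨ν, hν, W, hW, p, ?_, ?_, ?_, ?_, ?_, ?_⟩
  · -- C¹ entries
    have hΦC1 : ∀ i j, ContDiff ℝ 1 fun θ => Φ θ i j := by
      intro i j
      rw [contDiff_one_iff_deriv]
      refine ⟨hΦdiff i j, ?_⟩
      have hrw : deriv (fun t => Φ t i j) = fun t => ∑ k, A t i k * Φ t k j := by
        funext t
        rw [(hΦ t i j).deriv, Matrix.mul_apply]
      rw [hrw]
      exact continuous_finset_sum _ fun k _ =>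
        ((hAsmooth i k).continuous).mul (hΦcont k j)
    have hRotC1 : ∀ i j, ContDiff ℝ 1 fun θ => Rot (-ν * θ) i j := by
      intro i j
      have hc : ContDiff ℝ 1 fun θ : ℝ => Real.cos (-ν * θ) :=
        (Real.contDiff_cos.of_le le_top).comp (contDiff_const.mul contDiff_id)
      have hs : ContDiff ℝ 1 fun θ : ℝ => Real.sin (-ν * θ) :=
        (Real.contDiff_sin.of_le le_top).comp (contDiff_const.mul contDiff_id)
      fin_cases i <;> fin_cases j <;>
        simp only [Rot, Matrix.of_apply, Matrix.cons_val_zero, Matrix.cons_val_one,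
          Matrix.head_cons, Matrix.cons_val_two, Matrix.tail_cons, Matrix.cons_val',
          Matrix.empty_val', Matrix.cons_val_fin_one, Matrix.head_fin_const] <;>
        first
          | exact contDiff_const
          | exact hc
          | exact hs
          | exact hs.neg
    have hmul : ∀ {F G : ℝ → Matrix (Fin 3) (Fin 3) ℝ},
        (∀ i j, ContDiff ℝ 1 fun θ => F θ i j) → (∀ i j, ContDiff ℝ 1 fun θ => G θ i j) →
        ∀ i j, ContDiff ℝ 1 fun θ => (F θ * G θ) i j := by
      intro F G hF hG i j
      simp only [Matrix.mul_apply]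
      exact ContDiff.sum fun k _ => (hF i k).mul (hG k j)
    have hconstmat : ∀ (C : Matrix (Fin 3) (Fin 3) ℝ) (i j : Fin 3),
        ContDiff ℝ 1 fun _ : ℝ => C i j := fun C i j => contDiff_const
    exact hmul hΦC1 (hmul (hmul (hconstmat W) hRotC1) (hconstmat Wᵀ))
  · -- SO(3)-valued
    intro θ
    exact SO3_mul (hΦSO3 θ) (SO3_mul (SO3_mul hW (Rot_SO3 _)) (SO3_transpose hW))
  · -- p 0 = 1
    rw [hpdef]
    simp only [mul_zero, Rot_zero, hΦ0, Matrix.one_mul, Matrix.mul_one]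
    exact hWWt
  · -- periodicity
    intro θ
    rw [hpdef]
    simp only
    rw [hper θ, hRW]
    calc Φ θ * (W * Rot (2 * Real.pi * ν) * Wᵀ) * (W * Rot (-ν * (θ + 2 * Real.pi)) * Wᵀ)
        = Φ θ * ((W * Rot (2 * Real.pi * ν) * Wᵀ) * (W * Rot (-ν * (θ + 2 * Real.pi)) * Wᵀ)) := by
          rw [Matrix.mul_assoc]
      _ = Φ θ * (W * Rot (2 * Real.pi * ν + -ν * (θ + 2 * Real.pi)) * Wᵀ) := by rw [conj_mul]
      _ = Φ θ * (W * Rot (-ν * θ) * Wᵀ) := by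
          congr 2
          ring_nf
  · -- the Floquet factorization
    intro θ
    rw [FloquetAux.exp_smul_J, hpdef]
    simp only
    calc Φ θ
        = Φ θ * (W * Rot (-ν * θ + ν * θ) * Wᵀ) := by
          rw [show -ν * θ + ν * θ = 0 by ring, Rot_zero, Matrix.mul_one, hWWt,
            Matrix.mul_one]
      _ = Φ θ * ((W * Rot (-ν * θ) * Wᵀ) * (W * Rot (ν * θ) * Wᵀ)) := by rw [conj_mul]
      _ = Φ θ * (W * Rot (-ν * θ) * Wᵀ) * W * Rot (ν * θ) * Wᵀ := by
          noncomm_ring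
  · -- the spectrum of the monodromy matrix
    rw [hRW, spectrum_conj_rot (2 * Real.pi * ν) hW]
    have h1 : Complex.exp ((((2 * Real.pi * ν) : ℝ) : ℂ) * Complex.I)
        = Complex.exp (2 * Real.pi * Complex.I * ν) := by
      congr 1
      push_cast
      ring
    have h2 : Complex.exp (-((((2 * Real.pi * ν) : ℝ) : ℂ) * Complex.I))
        = Complex.exp (-(2 * Real.pi * Complex.I * ν)) := by
      congr 1
      push_cast
      ring
    rw [h1, h2]
end
end

section
/- If f : ℝ → ℝ is quasiperiodic with tune vector ν ∈ ℝ^k, then there exist an integer k̂ with 1 ≤ k̂ ≤ k and a nonresonant vector ν̂ ∈ ℝ^{k̂} such that f is quasiperiodic with tune vector ν̂. -/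
open MeasureTheory Filter
noncomputable section

lemma periodic2pi_shift_aux {k : ℕ} {F : (Fin k → ℝ) → ℝ} (hF : Periodic2Pi F)
    (s : Finset (Fin k)) : ∀ (z w : Fin k → ℝ),
    (∀ i ∈ s, ∃ c : ℤ, w i = z i + 2 * Real.pi * c) → (∀ i ∉ s, w i = z i) → F w = F z := by
  classical
  induction s using Finset.induction_on with
  | empty => intro z w _ h; exact congrArg F (funext fun i => h i (by simp))
  | @insert a s ha ih =>
    intro z w hin hout
    obtain ⟨c, hc⟩ := hin a (Finset.mem_insert_self a s)
    have hg : Function.Periodic (fun t => F (Function.update w a t)) (2 * Real.pi) := by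
      intro t
      have := hF (Function.update w a t) a
      simpa [Function.update_idem] using this
    have h1 : F w = F (Function.update w a (z a)) := by
      have h2 := (hg.int_mul c) (z a)
      have h3 : Function.update w a (z a + ↑c * (2 * Real.pi)) = w := by
        rw [show z a + ↑c * (2 * Real.pi) = w a by rw [hc]; ring]
        exact Function.update_eq_self a w
      calc F w = F (Function.update w a (z a + ↑c * (2 * Real.pi))) := by rw [h3]
        _ = F (Function.update w a (z a)) := h2
    rw [h1]
    refine ih z _ (fun i hi => ?_) (fun i hi => ?_)
    · have hne : i ≠ a := fun h => ha (h ▸ hi)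
      rw [Function.update_of_ne hne]
      exact hin i (Finset.mem_insert_of_mem hi)
    · by_cases hia : i = a
      · subst hia; simp
      · rw [Function.update_of_ne hia]
        exact hout i (by simp [hia, hi])

lemma periodic2pi_int_shift {k : ℕ} {F : (Fin k → ℝ) → ℝ} (hF : Periodic2Pi F)
    (z : Fin k → ℝ) (c : Fin k → ℤ) :
    F (fun i => z i + 2 * Real.pi * c i) = F z := by
  exact periodic2pi_shift_aux hF Finset.univ z _ (fun i _ => ⟨c i, rfl⟩) (fun i hi => absurd (Finset.mem_univ i) hi)

/-- Lemma 4.2. -/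
theorem quasiperiodic_tune_reduction {k : ℕ} (hk : 1 ≤ k) (ν : Fin k → ℝ) (f : ℝ → ℝ)
    (hf : IsQuasiperiodic ν f) :
    ∃ khat : ℕ, 1 ≤ khat ∧ khat ≤ k ∧ ∃ νhat : Fin khat → ℝ,
      Nonresonant νhat ∧ IsQuasiperiodic νhat f := by
  
  classical
  obtain ⟨F, hFc, hFp, hFeq⟩ := hf
  by_cases hν : ∀ i, ν i = 0
  · refine ⟨1, le_refl 1, hk, fun _ => 1, ?_, ?_⟩
    · intro m hm
      have h0 : (m 0 : ℝ) = 0 := by simpa [zdot] using hm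
      have : m 0 = 0 := by exact_mod_cast h0
      funext i
      have : i = 0 := Subsingleton.elim i 0
      simp [this, ‹m 0 = 0›]
    · refine ⟨fun _ => F (fun _ => 0), continuous_const, fun z i => rfl, fun θ => ?_⟩
      rw [hFeq]
      congr 1
      funext i
      simp [hν i]
  · push_neg at hν
    obtain ⟨i0, hi0⟩ := hν
    set W := Submodule.span ℚ (Set.range ν) with hW
    haveI : FiniteDimensional ℚ W := FiniteDimensional.span_of_finite ℚ (Set.finite_range ν)
    have hmem : ∀ i, ν i ∈ W := fun i => Submodule.subset_span ⟨i, rfl⟩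
    set khat := Module.finrank ℚ W with hkhat
    have hk2 : khat ≤ k := by
      have := finrank_range_le_card (R := ℚ) ν
      simpa [Set.finrank] using this
    have hk1 : 1 ≤ khat := by
      have : Nontrivial W := by
        refine nontrivial_of_ne ⟨ν i0, hmem i0⟩ 0 ?_
        intro h
        exact hi0 (by simpa using congrArg Subtype.val h)
      exact Module.finrank_pos_iff.mpr this
    let b : Module.Basis (Fin khat) ℚ W := Module.finBasis ℚ W
    set q : Fin k → Fin khat → ℚ := fun i j => b.repr ⟨ν i, hmem i⟩ j with hq
    set D : ℕ := ∏ i, ∏ j, (q i j).den with hD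
    have hDpos : 0 < D := Finset.prod_pos fun i _ => Finset.prod_pos fun j _ => (q i j).pos
    have hDne : (D : ℝ) ≠ 0 := Nat.cast_ne_zero.mpr hDpos.ne'
    have hdvd : ∀ i j, (q i j).den ∣ D := by
      intro i j
      have h1 : (q i j).den ∣ ∏ j', (q i j').den :=
        Finset.dvd_prod_of_mem (fun j' => (q i j').den) (Finset.mem_univ j)
      have h2 : (∏ j', (q i j').den) ∣ D :=
        Finset.dvd_prod_of_mem (fun i' => ∏ j', (q i' j').den) (Finset.mem_univ i)
      exact dvd_trans h1 h2
    have hn : ∀ i j, ∃ n : ℤ, (n : ℚ) = q i j * D := by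
      intro i j
      obtain ⟨c, hc⟩ := hdvd i j
      refine ⟨(q i j).num * c, ?_⟩
      have hden : ((q i j).den : ℚ) ≠ 0 := Nat.cast_ne_zero.mpr (q i j).den_nz
      have hnum : ((q i j).num : ℚ) = q i j * (q i j).den := by
        rw [Rat.mul_den_eq_num]
      push_cast [hc, hnum]
      ring
    choose n hnq using hn
    set νhat : Fin khat → ℝ := fun j => (b j : ℝ) / D with hνhat
    have hcast : ∀ i j, ((n i j : ℝ)) = (q i j : ℝ) * D := by
      intro i j
      have := hnq i j
      exact_mod_cast congrArg (fun x : ℚ => (x : ℝ)) this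
    have hkey : ∀ i, ν i = ∑ j, (n i j : ℝ) * νhat j := by
      intro i
      have hrepr := b.sum_repr ⟨ν i, hmem i⟩
      have hrepr' := congrArg (fun x : W => (x : ℝ)) hrepr
      simp only [Submodule.coe_sum, Submodule.coe_smul, Rat.smul_def] at hrepr'
      calc ν i = ∑ j, (q i j : ℝ) * (b j : ℝ) := hrepr'.symm
        _ = ∑ j, (n i j : ℝ) * νhat j := by
            refine Finset.sum_congr rfl fun j _ => ?_
            rw [hcast i j, hνhat]
            field_simp
    refine ⟨khat, hk1, hk2, νhat, ?_, ?_⟩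
    · intro m hm
      have h1 : ∑ j, (m j : ℝ) * (b j : ℝ) = 0 := by
        have : (∑ j, (m j : ℝ) * (b j : ℝ)) / D = 0 := by
          rw [← hm]
          simp only [zdot, hνhat, Finset.sum_div]
          exact Finset.sum_congr rfl fun j _ => by ring
        field_simp at this
        exact this.trans (mul_zero _)
      have h2 : (∑ j, ((m j : ℚ)) • b j : W) = 0 := by
        apply Subtype.ext
        simp only [Submodule.coe_sum, Submodule.coe_smul, Rat.smul_def, ZeroMemClass.coe_zero]
        rw [← h1]
        refine Finset.sum_congr rfl fun j _ => ?_
        push_cast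
        ring
      have h3 := Fintype.linearIndependent_iff.mp b.linearIndependent (fun j => (m j : ℚ)) h2
      funext j
      have := h3 j
      simpa using this
    · refine ⟨fun w => F (fun i => ∑ j, (n i j : ℝ) * w j), ?_, ?_, ?_⟩
      · exact hFc.comp (continuous_pi fun i =>
          continuous_finset_sum _ fun j _ => (continuous_const.mul (continuous_apply j)))
      · intro w j0
        have h1 : ∀ i, (∑ j, (n i j : ℝ) * Function.update w j0 (w j0 + 2 * Real.pi) j)
            = (∑ j, (n i j : ℝ) * w j) + 2 * Real.pi * (n i j0) := by
          intro i
          have step : ∀ j, (n i j : ℝ) * Function.update w j0 (w j0 + 2 * Real.pi) j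
              = (n i j : ℝ) * w j + (if j = j0 then 2 * Real.pi * (n i j0 : ℝ) else 0) := by
            intro j
            by_cases hj : j = j0
            · subst hj; simp [Function.update_self]; ring
            · simp [Function.update_of_ne hj, hj]
          rw [Finset.sum_congr rfl fun j _ => step j, Finset.sum_add_distrib]
          simp
        simp only [h1]
        exact periodic2pi_int_shift hFp (fun i => ∑ j, (n i j : ℝ) * w j) (fun i => n i j0)
      · intro θ
        rw [hFeq]
        congr 1
        funext i
        rw [hkey i, Finset.sum_mul]
        exact Finset.sum_congr rfl fun j _ => by ring
end
end

section
/- Let f : ℝ → ℂ be quasiperiodic with tune vector ν ∈ ℝ^k. Then for every λ ∈ ℝ the limit a(f,λ) := lim_{T→∞} (1/T) ∫₀^T f(θ) e^{−iλθ} dθ exists. -/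
open MeasureTheory Filter
noncomputable section

open Complex Topology

namespace QPaux

lemma exp_avg (c : ℝ) :
    ∃ L : ℂ, Tendsto (fun T : ℝ => (1 / (T : ℂ)) * ∫ θ in (0:ℝ)..T,
      Complex.exp (Complex.I * c * θ)) atTop (nhds L) := by
  rcases eq_or_ne c 0 with hc | hc
  · refine ⟨1, tendsto_const_nhds.congr' ?_⟩
    filter_upwards [eventually_ge_atTop (1:ℝ)] with T hT
    have hT0 : (T:ℂ) ≠ 0 := by
      exact_mod_cast (lt_of_lt_of_le one_pos hT).ne'
    simp [hc, hT0]
  · have hIc : Complex.I * (c:ℂ) ≠ 0 := by simp [Complex.ext_iff, hc]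
    refine ⟨0, ?_⟩
    have key : ∀ T : ℝ, (∫ θ in (0:ℝ)..T, Complex.exp (Complex.I * c * θ))
        = (Complex.exp (Complex.I * c * T) - 1) / (Complex.I * c) := by
      intro T
      have h := integral_exp_mul_complex (a := (0:ℝ)) (b := T) hIc
      rw [h]
      norm_num
    apply squeeze_zero_norm' (a := fun T => (2 / ‖Complex.I * (c:ℂ)‖) / T)
    · filter_upwards [eventually_ge_atTop (1:ℝ)] with T hT
      have hT0 : (0:ℝ) < T := lt_of_lt_of_le one_pos hT
      have h2 : ‖Complex.exp (Complex.I * c * T) - 1‖ ≤ 2 := by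
        calc ‖Complex.exp (Complex.I * c * T) - 1‖ ≤ ‖Complex.exp (Complex.I * c * T)‖ + ‖(1:ℂ)‖ :=
              norm_sub_le _ _
          _ = 2 := by
              rw [show Complex.I * (c:ℂ) * (T:ℝ) = ((c*T : ℝ):ℂ) * Complex.I by push_cast; ring,
                Complex.norm_exp_ofReal_mul_I]
              norm_num
      rw [key, norm_mul, norm_div, norm_div, norm_one, Complex.norm_real,
        Real.norm_eq_abs, abs_of_pos hT0]
      calc 1 / T * (‖Complex.exp (Complex.I * ↑c * ↑T) - 1‖ / ‖Complex.I * (c:ℂ)‖)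
          ≤ 1 / T * (2 / ‖Complex.I * (c:ℂ)‖) := by gcongr
        _ = 2 / ‖Complex.I * (c:ℂ)‖ / T := by ring
    · exact Tendsto.div_atTop tendsto_const_nhds tendsto_id

lemma periodic_shift {k : ℕ} {F : (Fin k → ℝ) → ℂ} (hF : Periodic2Pi F)
    (z : Fin k → ℝ) (m : Fin k → ℤ) : F (fun i => z i + 2 * Real.pi * m i) = F z := by
  have hone : ∀ (z : Fin k → ℝ) (i : Fin k) (n : ℤ),
      F (Function.update z i (z i + (n : ℝ) * (2 * Real.pi))) = F z := by
    intro z i n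
    have hp : Function.Periodic (fun t => F (Function.update z i t)) (2 * Real.pi) := by
      intro t
      have h := hF (Function.update z i t) i
      simpa [Function.update_idem] using h
    have h2 := (hp.int_mul n) (z i)
    simpa using h2
  have main : ∀ s : Finset (Fin k), ∀ z : Fin k → ℝ,
      F (fun i => z i + (if i ∈ s then 2 * Real.pi * m i else 0)) = F z := by
    intro s
    induction s using Finset.induction_on with
    | empty => intro z; simp
    | insert _ _ ha =>
      rename_i a s ih
      intro z
      have hfun : (fun i => z i + if i ∈ insert a s then 2 * Real.pi * m i else 0)
          = Function.update (fun i => z i + if i ∈ s then 2 * Real.pi * m i else 0) a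
              ((fun i => z i + if i ∈ s then 2 * Real.pi * m i else 0) a + (m a : ℝ) * (2 * Real.pi)) := by
        funext j
        rcases eq_or_ne j a with rfl | hj
        · rw [Function.update_self]
          simp [ha]
          ring
        · rw [Function.update_of_ne hj]
          simp [Finset.mem_insert, hj]
      rw [hfun, hone, ih]
  have h := main Finset.univ z
  simpa using h



instance factPi : Fact (0 < 2 * Real.pi) := ⟨by positivity⟩

abbrev Torus (k : ℕ) := Fin k → AddCircle (2 * Real.pi)

def proj {k : ℕ} : (Fin k → ℝ) → Torus k :=
  Pi.map fun _ (x : ℝ) => (x : AddCircle (2 * Real.pi))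

lemma proj_isQuotientMap {k : ℕ} : IsQuotientMap (proj (k := k)) :=
  (IsOpenQuotientMap.piMap fun _ => QuotientAddGroup.isOpenQuotientMap_mk).isQuotientMap

lemma proj_continuous {k : ℕ} : Continuous (proj (k := k)) :=
  (IsOpenQuotientMap.piMap fun _ => QuotientAddGroup.isOpenQuotientMap_mk).continuous

lemma descend {k : ℕ} {F : (Fin k → ℝ) → ℂ} (hc : Continuous F) (hp : Periodic2Pi F) :
    ∃ G : C(Torus k, ℂ), ∀ x, G (proj x) = F x := by
  have hfib : ∀ x y : Fin k → ℝ, proj x = proj y → F x = F y := by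
    intro x y hxy
    have h : ∀ i, ∃ n : ℤ, x i = y i + 2 * Real.pi * n := by
      intro i
      have h1 : ((x i : ℝ) : AddCircle (2 * Real.pi)) = ((y i : ℝ) : AddCircle (2 * Real.pi)) :=
        congrFun hxy i
      rw [QuotientAddGroup.eq_iff_sub_mem] at h1
      obtain ⟨n, hn⟩ := AddSubgroup.mem_zmultiples_iff.mp h1
      refine ⟨n, ?_⟩
      have : (n : ℝ) * (2 * Real.pi) = x i - y i := by rw [← hn]; push_cast [zsmul_eq_mul]; ring
      linarith [this]
    choose n hn using h
    have hx : x = fun i => y i + 2 * Real.pi * n i := funext hn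
    rw [hx, periodic_shift hp]
  have hG₀ : ∀ x, (fun t : Torus k => F (fun i => (t i).out)) (proj x) = F x := by
    intro x
    apply hfib
    funext i
    exact QuotientAddGroup.out_eq' _
  have hcont : Continuous (fun t : Torus k => F (fun i => (t i).out)) := by
    rw [proj_isQuotientMap.continuous_iff]
    have : ((fun t : Torus k => F (fun i => (t i).out)) ∘ proj) = F := funext hG₀
    rw [this]
    exact hc
  exact ⟨⟨_, hcont⟩, hG₀⟩

open AddCircle in
def char {k : ℕ} (m : Fin k → ℤ) : C(Torus k, ℂ) :=
  ⟨fun t => ∏ i, fourier (m i) (t i),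
   continuous_finset_prod _ fun i _ => (map_continuous (fourier (m i))).comp (continuous_apply i)⟩

open AddCircle in
lemma char_zero' {k : ℕ} : char (0 : Fin k → ℤ) = 1 := by
  ext t
  simp [char, fourier_zero]

open AddCircle in
lemma char_mul {k : ℕ} (m m' : Fin k → ℤ) : char m * char m' = char (m + m') := by
  ext t
  simp only [char, ContinuousMap.mul_apply, ContinuousMap.coe_mk, ← Finset.prod_mul_distrib]
  exact Finset.prod_congr rfl fun i _ => (fourier_add).symm

open AddCircle ComplexConjugate in
lemma char_star {k : ℕ} (m : Fin k → ℤ) : star (char m) = char (-m) := by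
  ext t
  simp only [char, ContinuousMap.star_apply, ContinuousMap.coe_mk, star_prod]
  refine Finset.prod_congr rfl fun i _ => ?_
  rw [Pi.neg_apply, fourier_neg]
  rfl

def charSpan (k : ℕ) : Submodule ℂ C(Torus k, ℂ) :=
  Submodule.span ℂ (Set.range (char (k := k)))

lemma mul_mem_charSpan {k : ℕ} {x y : C(Torus k, ℂ)}
    (hx : x ∈ charSpan k) (hy : y ∈ charSpan k) : x * y ∈ charSpan k := by
  induction hx using Submodule.span_induction with
  | mem a ha =>
    obtain ⟨m, rfl⟩ := ha
    induction hy using Submodule.span_induction with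
    | mem b hb =>
      obtain ⟨m', rfl⟩ := hb
      rw [char_mul]
      exact Submodule.subset_span ⟨m + m', rfl⟩
    | zero => rw [mul_zero]; exact Submodule.zero_mem _
    | add u v hu hv ihu ihv => rw [mul_add]; exact Submodule.add_mem _ ihu ihv
    | smul c u hu ihu => rw [mul_smul_comm]; exact Submodule.smul_mem _ _ ihu
  | zero => rw [zero_mul]; exact Submodule.zero_mem _
  | add u v hu hv ihu ihv => rw [add_mul]; exact Submodule.add_mem _ ihu ihv
  | smul c u hu ihu => rw [smul_mul_assoc]; exact Submodule.smul_mem _ _ ihu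

lemma star_mem_charSpan {k : ℕ} {x : C(Torus k, ℂ)} (hx : x ∈ charSpan k) :
    star x ∈ charSpan k := by
  induction hx using Submodule.span_induction with
  | mem a ha =>
    obtain ⟨m, rfl⟩ := ha
    rw [char_star]
    exact Submodule.subset_span ⟨-m, rfl⟩
  | zero => rw [star_zero]; exact Submodule.zero_mem _
  | add u v hu hv ihu ihv => rw [star_add]; exact Submodule.add_mem _ ihu ihv
  | smul c u hu ihu => rw [star_smul]; exact Submodule.smul_mem _ _ ihu

lemma adjoin_le_charSpan {k : ℕ} {x : C(Torus k, ℂ)}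
    (hx : x ∈ StarAlgebra.adjoin ℂ (Set.range (char (k := k)))) : x ∈ charSpan k := by
  induction hx using StarAlgebra.adjoin_induction with
  | mem a ha => exact Submodule.subset_span ha
  | algebraMap r =>
    rw [Algebra.algebraMap_eq_smul_one, ← char_zero']
    exact Submodule.smul_mem _ _ (Submodule.subset_span ⟨0, rfl⟩)
  | add u v hu hv ihu ihv => exact Submodule.add_mem _ ihu ihv
  | mul u v hu hv ihu ihv => exact mul_mem_charSpan ihu ihv
  | star u hu ihu => exact star_mem_charSpan ihu

open AddCircle in
lemma char_separates {k : ℕ} :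
    (StarAlgebra.adjoin ℂ (Set.range (char (k := k)))).SeparatesPoints := by
  intro t s hts
  obtain ⟨i, hi⟩ : ∃ i, t i ≠ s i := by
    by_contra h
    push_neg at h
    exact hts (funext h)
  have hval : ∀ u : Torus k, char (Pi.single i 1) u = toCircle (u i) := by
    intro u
    simp only [char, ContinuousMap.coe_mk]
    rw [Finset.prod_eq_single i]
    · rw [Pi.single_eq_same, fourier_one]
    · intro j _ hj
      rw [Pi.single_eq_of_ne hj, fourier_zero]
    · simp
  refine ⟨_, ⟨char (Pi.single i 1), StarAlgebra.subset_adjoin ℂ _ ⟨_, rfl⟩, rfl⟩, ?_⟩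
  dsimp only
  rw [hval, hval]
  intro h
  rw [Circle.coe_inj] at h
  exact hi (injective_toCircle (by positivity : (0:ℝ) < 2 * Real.pi).ne' h)

lemma char_dense {k : ℕ} (G : C(Torus k, ℂ)) {ε : ℝ} (hε : 0 < ε) :
    ∃ h ∈ charSpan k, dist G h < ε := by
  have htop := ContinuousMap.starSubalgebra_topologicalClosure_eq_top_of_separatesPoints
    _ (char_separates (k := k))
  have hG : G ∈ (StarAlgebra.adjoin ℂ (Set.range (char (k := k)))).topologicalClosure := by
    rw [htop]; trivial
  have hG' : G ∈ closure ((StarAlgebra.adjoin ℂ (Set.range (char (k := k)))) : Set _) := hG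
  obtain ⟨h, hh, hd⟩ := Metric.mem_closure_iff.mp hG' ε hε
  exact ⟨h, adjoin_le_charSpan hh, hd⟩


open AddCircle in
lemma char_avg {k : ℕ} (ν : Fin k → ℝ) (m : Fin k → ℤ) (θ : ℝ) :
    char m (proj fun i => ν i * θ)
      = Complex.exp (Complex.I * ((∑ i, (m i : ℝ) * ν i : ℝ) : ℂ) * θ) := by
  have h2π : ((2 * Real.pi : ℝ) : ℂ) ≠ 0 := by
    exact_mod_cast (by positivity : (0:ℝ) < 2 * Real.pi).ne'
  calc char m (proj fun i => ν i * θ)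
      = ∏ i, Complex.exp (Complex.I * (((m i : ℝ) * ν i : ℝ) : ℂ) * θ) := by
        simp only [char, ContinuousMap.coe_mk, proj, Pi.map]
        refine Finset.prod_congr rfl fun i _ => ?_
        rw [fourier_coe_apply]
        congr 1
        push_cast at h2π ⊢
        field_simp
    _ = Complex.exp (∑ i, Complex.I * (((m i : ℝ) * ν i : ℝ) : ℂ) * θ) :=
        (Complex.exp_sum _ _).symm
    _ = _ := by
        congr 1
        push_cast
        rw [Finset.mul_sum, Finset.sum_mul]

def avg {k : ℕ} (ν : Fin k → ℝ) (g : C(Torus k, ℂ)) (T : ℝ) : ℂ :=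
  (1 / (T : ℂ)) * ∫ θ in (0:ℝ)..T, g (proj fun i => ν i * θ)

lemma cont_comp {k : ℕ} (ν : Fin k → ℝ) (g : C(Torus k, ℂ)) :
    Continuous fun θ : ℝ => g (proj fun i => ν i * θ) :=
  g.continuous.comp (proj_continuous.comp
    (continuous_pi fun _ => continuous_const.mul continuous_id))

lemma avg_span_exists {k : ℕ} (ν : Fin k → ℝ) {g : C(Torus k, ℂ)} (hg : g ∈ charSpan k) :
    ∃ L, Tendsto (avg ν g) atTop (nhds L) := by
  induction hg using Submodule.span_induction with
  | mem a ha =>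
    obtain ⟨m, rfl⟩ := ha
    obtain ⟨L, hL⟩ := exp_avg (∑ i, (m i : ℝ) * ν i)
    refine ⟨L, ?_⟩
    have heq : avg ν (char m) = fun T : ℝ => (1 / (T : ℂ)) * ∫ θ in (0:ℝ)..T,
        Complex.exp (Complex.I * ((∑ i, (m i : ℝ) * ν i : ℝ) : ℂ) * θ) := by
      funext T
      unfold avg
      congr 1
      exact intervalIntegral.integral_congr fun θ _ => char_avg ν m θ
    rw [heq]
    exact hL
  | zero =>
    refine ⟨0, ?_⟩
    have heq : avg ν 0 = fun _ : ℝ => (0:ℂ) := by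
      funext T
      unfold avg
      simp
    rw [heq]
    exact tendsto_const_nhds
  | add u v hu hv ihu ihv =>
    obtain ⟨L1, h1⟩ := ihu
    obtain ⟨L2, h2⟩ := ihv
    refine ⟨L1 + L2, ?_⟩
    have heq : avg ν (u + v) = fun T => avg ν u T + avg ν v T := by
      funext T
      unfold avg
      rw [← mul_add]
      congr 1
      rw [← intervalIntegral.integral_add ((cont_comp ν u).intervalIntegrable _ _)
        ((cont_comp ν v).intervalIntegrable _ _)]
      exact intervalIntegral.integral_congr fun θ _ => rfl
    rw [heq]
    exact h1.add h2
  | smul c u hu ihu =>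
    obtain ⟨L, h⟩ := ihu
    refine ⟨c * L, ?_⟩
    have heq : avg ν (c • u) = fun T => c * avg ν u T := by
      funext T
      unfold avg
      simp only [ContinuousMap.coe_smul, Pi.smul_apply, smul_eq_mul]
      rw [intervalIntegral.integral_const_mul]
      ring
    rw [heq]
    exact h.const_mul c

lemma avg_exists {k : ℕ} (ν : Fin k → ℝ) (G : C(Torus k, ℂ)) :
    ∃ L, Tendsto (avg ν G) atTop (nhds L) := by
  apply cauchySeq_tendsto_of_complete
  rw [Metric.cauchySeq_iff]
  intro ε hε
  obtain ⟨h, hmem, hd⟩ := char_dense G (show (0:ℝ) < ε/5 by positivity)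
  obtain ⟨L, hL⟩ := avg_span_exists ν hmem
  rw [Metric.tendsto_atTop] at hL
  obtain ⟨N, hN⟩ := hL (ε/5) (by positivity)
  refine ⟨max N 1, fun T1 hT1 T2 hT2 => ?_⟩
  have key : ∀ T : ℝ, 1 ≤ T → dist (avg ν G T) (avg ν h T) ≤ ε/5 := by
    intro T hT
    have hT0 : (0:ℝ) < T := lt_of_lt_of_le one_pos hT
    have hi1 := (cont_comp ν G).intervalIntegrable (μ := volume) 0 T
    have hi2 := (cont_comp ν h).intervalIntegrable (μ := volume) 0 T
    rw [dist_eq_norm]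
    unfold avg
    rw [← mul_sub, ← intervalIntegral.integral_sub hi1 hi2, norm_mul]
    have hbound : ‖∫ θ in (0:ℝ)..T,
        (G (proj fun i => ν i * θ) - h (proj fun i => ν i * θ))‖ ≤ (ε/5) * |T - 0| := by
      apply intervalIntegral.norm_integral_le_of_norm_le_const
      intro θ _
      rw [← dist_eq_norm]
      calc dist (G (proj fun i => ν i * θ)) (h (proj fun i => ν i * θ)) ≤ dist G h :=
            ContinuousMap.dist_apply_le_dist _
        _ ≤ ε/5 := le_of_lt hd
    have h1T : ‖(1 : ℂ) / (T:ℂ)‖ = 1/T := by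
      rw [norm_div, norm_one, Complex.norm_real, Real.norm_eq_abs, abs_of_pos hT0]
    rw [h1T]
    calc (1/T) * ‖∫ θ in (0:ℝ)..T,
          (G (proj fun i => ν i * θ) - h (proj fun i => ν i * θ))‖
        ≤ (1/T) * ((ε/5) * |T - 0|) := by
          apply mul_le_mul_of_nonneg_left hbound (by positivity)
      _ = ε/5 := by
          rw [sub_zero, abs_of_pos hT0]
          field_simp
  have k1 := key T1 (le_trans (le_max_right N 1) hT1)
  have k2 := key T2 (le_trans (le_max_right N 1) hT2)
  have n1 := hN T1 (le_trans (le_max_left N 1) hT1)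
  have n2 := hN T2 (le_trans (le_max_left N 1) hT2)
  have tri := dist_triangle4 (avg ν G T1) (avg ν h T1) (avg ν h T2) (avg ν G T2)
  have mid := dist_triangle (avg ν h T1) L (avg ν h T2)
  have c1 : dist L (avg ν h T2) = dist (avg ν h T2) L := dist_comm _ _
  have c2 : dist (avg ν h T2) (avg ν G T2) = dist (avg ν G T2) (avg ν h T2) := dist_comm _ _
  calc dist (avg ν G T1) (avg ν G T2)
      ≤ dist (avg ν G T1) (avg ν h T1) + dist (avg ν h T1) (avg ν h T2)
        + dist (avg ν h T2) (avg ν G T2) := tri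
    _ < ε := by
        rw [c2]
        have : dist (avg ν h T1) (avg ν h T2) < 2 * (ε/5) := by
          calc dist (avg ν h T1) (avg ν h T2) ≤ dist (avg ν h T1) L + dist L (avg ν h T2) := mid
            _ < 2 * (ε/5) := by rw [c1]; linarith
        linarith

lemma qp_avg_exists {k : ℕ} (ν : Fin k → ℝ) (g : ℝ → ℂ) (hg : IsQuasiperiodic ν g) :
    ∃ L, Tendsto (fun T : ℝ => (1 / (T:ℂ)) * ∫ θ in (0:ℝ)..T, g θ) atTop (nhds L) := by
  obtain ⟨F, hFc, hFp, hFe⟩ := hg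
  obtain ⟨G, hG⟩ := descend hFc hFp
  obtain ⟨L, hL⟩ := avg_exists ν G
  refine ⟨L, ?_⟩
  have heq : (fun T : ℝ => (1/(T:ℂ)) * ∫ θ in (0:ℝ)..T, g θ) = avg ν G := by
    funext T
    unfold avg
    congr 1
    exact intervalIntegral.integral_congr fun θ _ => by rw [hFe θ, hG]
  rw [heq]
  exact hL

end QPaux


/-- Lemma 4.3d. -/
theorem quasiperiodic_average_exists {k : ℕ} (ν : Fin k → ℝ) (f : ℝ → ℂ)
    (hf : IsQuasiperiodic ν f) (lam : ℝ) :
    ∃ L : ℂ, Tendsto (fun T : ℝ => (1 / (T : ℂ)) *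
        ∫ θ in (0:ℝ)..T, f θ * Complex.exp (-(Complex.I * lam * θ)))
      atTop (nhds L) := by
  obtain ⟨F, hFc, hFp, hFe⟩ := hf
  set ν' : Fin (k+1) → ℝ := Fin.snoc ν lam with hν'
  have main : IsQuasiperiodic ν' (fun θ : ℝ => f θ * Complex.exp (-(Complex.I * lam * θ))) := by
    refine ⟨fun z => F (fun i => z i.castSucc) * Complex.exp (-(Complex.I * (z (Fin.last k) : ℝ))),
      ?_, ?_, ?_⟩
    · apply Continuous.mul
      · exact hFc.comp (continuous_pi fun i => continuous_apply _)
      · exact Complex.continuous_exp.comp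
          ((continuous_const.mul (Complex.continuous_ofReal.comp
            (continuous_apply (Fin.last k)))).neg)
    · intro z i
      induction i using Fin.lastCases with
      | last =>
        beta_reduce
        have h1 : (fun j : Fin k =>
            Function.update z (Fin.last k) (z (Fin.last k) + 2 * Real.pi) j.castSucc)
            = fun j : Fin k => z j.castSucc := by
          funext j
          exact Function.update_of_ne (Fin.castSucc_lt_last j).ne _ _
        rw [h1, Function.update_self]
        congr 1
        push_cast
        rw [mul_add, neg_add, Complex.exp_add]
        have : Complex.exp (-(Complex.I * (2 * Real.pi))) = 1 := by
          rw [show -(Complex.I * (2 * Real.pi)) = -(2 * Real.pi * Complex.I) by ring,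
            Complex.exp_neg, Complex.exp_two_pi_mul_I, inv_one]
        rw [this, mul_one]
      | cast i =>
        beta_reduce
        have h1 : (fun j : Fin k =>
            Function.update z i.castSucc (z i.castSucc + 2 * Real.pi) j.castSucc)
            = Function.update (fun j : Fin k => z j.castSucc) i
                ((fun j : Fin k => z j.castSucc) i + 2 * Real.pi) :=
          Function.update_comp_eq_of_injective' z (Fin.castSucc_injective k) i _
        have h2 := hFp (fun j : Fin k => z j.castSucc) i
        rw [Function.update_of_ne (Fin.castSucc_lt_last i).ne' , h1]
        simp only [] at h1 ⊢
        rw [h2]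
    · intro θ
      simp only [hν', Fin.snoc_castSucc, Fin.snoc_last]
      rw [← hFe]
      congr 1
      push_cast
      ring_nf
  obtain ⟨L, hL⟩ := QPaux.qp_avg_exists ν' _ main
  exact ⟨L, hL⟩
end
end

section
/- Let c₀ ∈ ℝ be such that the function θ ↦ exp(i c₀ θ) is quasiperiodic with tune vector ν ∈ ℝ^k (k ≥ 1). Then there exists n ∈ ℤ^k such that c₀ = n·ν. Moreover, if ν is nonresonant then n is unique. -/
open MeasureTheory Filter
noncomputable section

namespace ExpQPAux

open Complex

lemma norm_eI (x : ℝ) : ‖Complex.exp (Complex.I * x)‖ = 1 := by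
  rw [mul_comm]
  exact Complex.norm_exp_ofReal_mul_I x

lemma periodic_update_int {k : ℕ} {E : Type*} {F : (Fin k → ℝ) → E} (hF : Periodic2Pi F)
    (z : Fin k → ℝ) (i : Fin k) (n : ℤ) :
    F (Function.update z i (z i + (n : ℝ) * (2 * Real.pi))) = F z := by
  induction n using Int.induction_on with
  | zero => simp
  | succ n ih =>
    have h := hF (Function.update z i (z i + (n : ℝ) * (2 * Real.pi))) i
    rw [Function.update_self, Function.update_idem] at h
    push_cast at ih ⊢
    have e1 : z i + ((n : ℝ) + 1) * (2 * Real.pi)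
        = z i + (n : ℝ) * (2 * Real.pi) + 2 * Real.pi := by ring
    rw [e1, h, ih]
  | pred n ih =>
    have h := hF (Function.update z i (z i + (-(n : ℝ) - 1) * (2 * Real.pi))) i
    rw [Function.update_self, Function.update_idem] at h
    push_cast at ih ⊢
    have e1 : z i + (-(n : ℝ) - 1) * (2 * Real.pi) + 2 * Real.pi
        = z i + (-(n : ℝ)) * (2 * Real.pi) := by ring
    rw [e1] at h
    exact h.symm.trans ih

lemma periodic_shift_int {k : ℕ} {E : Type*} {F : (Fin k → ℝ) → E} (hF : Periodic2Pi F)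
    (g : Fin k → ℤ) (z : Fin k → ℝ) :
    F (fun i => z i + (g i : ℝ) * (2 * Real.pi)) = F z := by
  classical
  suffices H : ∀ s : Finset (Fin k), ∀ g : Fin k → ℤ, (∀ i ∉ s, g i = 0) →
      ∀ z : Fin k → ℝ, F (fun i => z i + (g i : ℝ) * (2 * Real.pi)) = F z by
    exact H Finset.univ g (by simp) z
  intro s
  induction s using Finset.induction_on with
  | empty =>
    intro g hg z
    have : (fun i => z i + (g i : ℝ) * (2 * Real.pi)) = z := by
      funext i; rw [hg i (Finset.notMem_empty i)]; simp
    rw [this]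
  | @insert a t ha ih =>
    intro g hg z
    set g' : Fin k → ℤ := Function.update g a 0 with hg'def
    have hg' : ∀ i ∉ t, g' i = 0 := by
      intro i hi
      by_cases hia : i = a
      · subst hia; simp [hg'def]
      · rw [hg'def, Function.update_of_ne hia]
        exact hg i (by simp [hia, hi])
    have key := ih g' hg' z
    set w : Fin k → ℝ := fun i => z i + (g' i : ℝ) * (2 * Real.pi) with hwdef
    have hw : (fun i => z i + (g i : ℝ) * (2 * Real.pi))
        = Function.update w a (w a + (g a : ℝ) * (2 * Real.pi)) := by
      funext i
      by_cases hia : i = a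
      · subst hia
        rw [Function.update_self]
        simp [hwdef, hg'def]
      · rw [Function.update_of_ne hia]
        simp [hwdef, hg'def, Function.update_of_ne hia]
    rw [hw, periodic_update_int hF w a (g a), key]

lemma zdot_sub {k : ℕ} (n n' : Fin k → ℤ) (ν : Fin k → ℝ) :
    zdot (n - n') ν = zdot n ν - zdot n' ν := by
  unfold zdot
  rw [← Finset.sum_sub_distrib]
  refine Finset.sum_congr rfl fun i _ => ?_
  push_cast [Pi.sub_apply]
  ring

end ExpQPAux

open ExpQPAux in
/-- Lemma 5.6. -/
theorem exp_quasiperiodic_tune {k : ℕ} (hk : 1 ≤ k) (ν : Fin k → ℝ) (c0 : ℝ)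
    (h : IsQuasiperiodic ν fun θ : ℝ => Complex.exp (Complex.I * c0 * θ)) :
    (∃ n : Fin k → ℤ, c0 = zdot n ν) ∧
    (Nonresonant ν → ∃! n : Fin k → ℤ, c0 = zdot n ν) := by
  classical
  have hex : ∃ n : Fin k → ℤ, c0 = zdot n ν := by
    obtain ⟨F, hFc, hFp, hFe⟩ := h
    by_contra hno
    push_neg at hno
    have hp0 : (0 : ℝ) < 2 * Real.pi := by positivity
    haveI : Fact ((0 : ℝ) < 2 * Real.pi) := ⟨hp0⟩
    let X := Fin k → AddCircle (2 * Real.pi)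
    let q : (Fin k → ℝ) → X := fun z i => (z i : AddCircle (2 * Real.pi))
    have hq : IsOpenQuotientMap q :=
      IsOpenQuotientMap.piMap fun _ => QuotientAddGroup.isOpenQuotientMap_mk
    -- invariance of F under the quotient
    have hinv : ∀ z w : Fin k → ℝ, q z = q w → F z = F w := by
      intro z w hzw
      have hex' : ∀ i, ∃ n : ℤ, w i = z i + (n : ℝ) * (2 * Real.pi) := by
        intro i
        have h1 : ((z i : ℝ) : AddCircle (2 * Real.pi)) = (w i : AddCircle (2 * Real.pi)) :=
          congrFun hzw i
        rw [QuotientAddGroup.eq_iff_sub_mem, AddSubgroup.mem_zmultiples_iff] at h1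
        obtain ⟨n, hn⟩ := h1
        rw [zsmul_eq_mul] at hn
        exact ⟨-n, by push_cast; linarith⟩
      choose g hg using hex'
      have hweq : w = fun i => z i + (g i : ℝ) * (2 * Real.pi) := funext hg
      rw [hweq, periodic_shift_int hFp]
    -- descend F to the torus
    let Fb : X → ℂ := fun x => F fun i => (AddCircle.equivIco (2 * Real.pi) 0 (x i) : ℝ)
    have hFb : ∀ z, Fb (q z) = F z := by
      intro z
      apply hinv
      funext i
      exact (AddCircle.equivIco (2 * Real.pi) 0).symm_apply_apply ((z i : AddCircle (2 * Real.pi)))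
    have hFbc : Continuous Fb := by
      rw [hq.isQuotientMap.continuous_iff]
      have : Fb ∘ q = F := funext hFb
      rw [this]; exact hFc
    -- monomials
    let χ : (Fin k → ℤ) → C(X, ℂ) := fun m =>
      ⟨fun x => ∏ i, fourier (m i) (x i),
        continuous_finset_prod _ fun i _ => (fourier (m i)).continuous.comp (continuous_apply i)⟩
    have hχ_mul : ∀ m m', χ m * χ m' = χ (m + m') := by
      intro m m'
      ext x
      show (∏ i, fourier (m i) (x i)) * (∏ i, fourier (m' i) (x i))
          = ∏ i, fourier ((m + m') i) (x i)
      rw [← Finset.prod_mul_distrib]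
      exact Finset.prod_congr rfl fun i _ => (by rw [Pi.add_apply, fourier_add])
    have hχ_zero : χ 0 = 1 := by
      ext x
      show ∏ i, fourier ((0 : Fin k → ℤ) i) (x i) = 1
      simp [fourier_zero]
    have hχ_star : ∀ m, star (χ m) = χ (-m) := by
      intro m
      ext x
      show star (∏ i, fourier (m i) (x i)) = ∏ i, fourier ((-m) i) (x i)
      rw [star_prod]
      exact Finset.prod_congr rfl fun i _ => by
        rw [Pi.neg_apply, fourier_neg]; rfl
    set S : Submodule ℂ C(X, ℂ) := Submodule.span ℂ (Set.range χ) with hSdef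
    have hmem_gen : ∀ m, χ m ∈ S := fun m => Submodule.subset_span ⟨m, rfl⟩
    have hmul_gen : ∀ m, ∀ y ∈ S, χ m * y ∈ S := by
      intro m y hy
      induction hy using Submodule.span_induction with
      | mem x hx => obtain ⟨m', rfl⟩ := hx; rw [hχ_mul]; exact hmem_gen _
      | zero => rw [mul_zero]; exact S.zero_mem
      | add x y _ _ hx hy => rw [mul_add]; exact S.add_mem hx hy
      | smul a x _ hx => rw [mul_smul_comm]; exact S.smul_mem a hx
    have hSmul' : ∀ x ∈ S, ∀ y ∈ S, x * y ∈ S := by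
      intro x hx
      induction hx using Submodule.span_induction with
      | mem x hx => obtain ⟨m, rfl⟩ := hx; exact hmul_gen m
      | zero => intro y _; rw [zero_mul]; exact S.zero_mem
      | add x y _ _ hx hy => intro z hz; rw [add_mul]; exact S.add_mem (hx z hz) (hy z hz)
      | smul a x _ hx => intro z hz; rw [smul_mul_assoc]; exact S.smul_mem a (hx z hz)
    have hSstar : ∀ x ∈ S, star x ∈ S := by
      intro x hx
      induction hx using Submodule.span_induction with
      | mem x hx => obtain ⟨m, rfl⟩ := hx; rw [hχ_star]; exact hmem_gen _
      | zero => rw [star_zero]; exact S.zero_mem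
      | add x y _ _ hx hy => rw [star_add]; exact S.add_mem hx hy
      | smul a x _ hx => rw [star_smul]; exact S.smul_mem _ hx
    let A : StarSubalgebra ℂ C(X, ℂ) :=
      { toSubalgebra := S.toSubalgebra (hχ_zero ▸ hmem_gen 0)
          (fun x y hx hy => hSmul' x hx y hy)
        star_mem' := fun hx => hSstar _ hx }
    have hmemA : ∀ f : C(X, ℂ), f ∈ A ↔ f ∈ S := fun f => Iff.rfl
    have hsep : A.SeparatesPoints := by
      intro x y hxy
      obtain ⟨i, hi⟩ := Function.ne_iff.mp hxy
      have hv : ∀ z : X, χ (Pi.single i 1) z = fourier 1 (z i) := by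
        intro z
        show ∏ j, fourier ((Pi.single i (1 : ℤ) : Fin k → ℤ) j) (z j) = fourier 1 (z i)
        rw [Finset.prod_eq_single i
          (fun j _ hj => by rw [Pi.single_eq_of_ne hj, fourier_zero]) (by simp)]
        rw [Pi.single_eq_same]
      refine ⟨_, ⟨χ (Pi.single i 1), (hmemA _).mpr (hmem_gen _), rfl⟩, ?_⟩
      show χ (Pi.single i 1) x ≠ χ (Pi.single i 1) y
      rw [hv, hv]
      simp only [fourier_one]
      intro hc
      rw [Circle.coe_inj] at hc
      exact hi (AddCircle.injective_toCircle hp0.ne' hc)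
    have htop := ContinuousMap.starSubalgebra_topologicalClosure_eq_top_of_separatesPoints A hsep
    have hFmem : (⟨Fb, hFbc⟩ : C(X, ℂ)) ∈ closure (A : Set C(X, ℂ)) := by
      have : (⟨Fb, hFbc⟩ : C(X, ℂ)) ∈ A.topologicalClosure := by
        rw [htop]; trivial
      exact this
    obtain ⟨g, hgA, hgd⟩ := Metric.mem_closure_iff.mp hFmem (1 / 2) (by norm_num)
    obtain ⟨c, hc⟩ := Finsupp.mem_span_range_iff_exists_finsupp.mp ((hmemA g).mp hgA)
    -- pointwise value of the monomials on the orbit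
    have hχval : ∀ (m : Fin k → ℤ) (θ : ℝ), χ m (q fun i => ν i * θ)
        = Complex.exp (Complex.I * ((zdot m ν * θ : ℝ) : ℂ)) := by
      intro m θ
      show ∏ i, fourier (m i) (((ν i * θ : ℝ) : AddCircle (2 * Real.pi))) = _
      have hterm : ∀ i, fourier (m i) (((ν i * θ : ℝ) : AddCircle (2 * Real.pi)))
          = Complex.exp (Complex.I * (((m i : ℝ) * (ν i * θ) : ℝ) : ℂ)) := by
        intro i
        rw [fourier_coe_apply]
        congr 1
        have hπ : (Real.pi : ℂ) ≠ 0 := by exact_mod_cast Real.pi_ne_zero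
        push_cast
        field_simp
      rw [Finset.prod_congr rfl fun i _ => hterm i, ← Complex.exp_sum]
      congr 1
      unfold zdot
      push_cast
      rw [Finset.sum_mul, Finset.mul_sum]
      exact Finset.sum_congr rfl fun i _ => by ring
    -- pointwise approximation along the orbit
    have hpt : ∀ θ : ℝ, ‖Complex.exp (Complex.I * ((c0 * θ : ℝ) : ℂ)) -
        ∑ m ∈ c.support, c m * Complex.exp (Complex.I * ((zdot m ν * θ : ℝ) : ℂ))‖ ≤ 1 / 2 := by
      intro θ
      have h1 : Fb (q fun i => ν i * θ) = Complex.exp (Complex.I * ((c0 * θ : ℝ) : ℂ)) := by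
        refine ((hFb (fun i => ν i * θ)).trans (hFe θ).symm).trans ?_
        exact congrArg Complex.exp (by push_cast; ring)
      have h2 : g (q fun i => ν i * θ)
          = ∑ m ∈ c.support, c m * Complex.exp (Complex.I * ((zdot m ν * θ : ℝ) : ℂ)) := by
        rw [← hc]
        simp only [Finsupp.sum, ContinuousMap.coe_sum, Finset.sum_apply, ContinuousMap.coe_smul,
          Pi.smul_apply, smul_eq_mul]
        exact Finset.sum_congr rfl fun m _ => by rw [hχval]
      calc ‖Complex.exp (Complex.I * ((c0 * θ : ℝ) : ℂ)) -
            ∑ m ∈ c.support, c m * Complex.exp (Complex.I * ((zdot m ν * θ : ℝ) : ℂ))‖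
          = dist ((⟨Fb, hFbc⟩ : C(X, ℂ)) (q fun i => ν i * θ)) (g (q fun i => ν i * θ)) := by
            rw [dist_eq_norm, ContinuousMap.coe_mk, h1, h2]
        _ ≤ dist (⟨Fb, hFbc⟩ : C(X, ℂ)) g := ContinuousMap.dist_apply_le_dist _
        _ ≤ 1 / 2 := le_of_lt hgd
    -- nonvanishing denominators
    have hlam : ∀ m ∈ c.support, zdot m ν - c0 ≠ 0 := fun m _ h0 => hno m (by linarith)
    set C : ℝ := ∑ m ∈ c.support, ‖c m‖ * (2 / |zdot m ν - c0|) with hCdef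
    have hC0 : 0 ≤ C := Finset.sum_nonneg fun m _ => by positivity
    set T : ℝ := 2 * C + 2 with hTdef
    have hT0 : 0 < T := by positivity
    have hpt2 : ∀ θ : ℝ, ‖(1 : ℂ) - ∑ m ∈ c.support,
        c m * Complex.exp (Complex.I * (((zdot m ν - c0) * θ : ℝ) : ℂ))‖ ≤ 1 / 2 := by
      intro θ
      have e1 : (1 : ℂ) - ∑ m ∈ c.support,
            c m * Complex.exp (Complex.I * (((zdot m ν - c0) * θ : ℝ) : ℂ))
          = Complex.exp (Complex.I * ((-(c0 * θ) : ℝ) : ℂ)) *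
            (Complex.exp (Complex.I * ((c0 * θ : ℝ) : ℂ)) -
              ∑ m ∈ c.support, c m * Complex.exp (Complex.I * ((zdot m ν * θ : ℝ) : ℂ))) := by
        rw [mul_sub, ← Complex.exp_add, Finset.mul_sum]
        congr 1
        · rw [show Complex.I * ((-(c0 * θ) : ℝ) : ℂ) + Complex.I * ((c0 * θ : ℝ) : ℂ) = 0 by
            push_cast; ring, Complex.exp_zero]
        · refine Finset.sum_congr rfl fun m _ => ?_
          rw [mul_left_comm, ← Complex.exp_add]
          congr 2
          push_cast
          ring
      rw [e1, norm_mul, norm_eI, one_mul]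
      exact hpt θ
    have hcont : ∀ m : Fin k → ℤ,
        Continuous fun θ : ℝ => Complex.exp (Complex.I * (((zdot m ν - c0) * θ : ℝ) : ℂ)) := by
      intro m
      exact Complex.continuous_exp.comp (by fun_prop)
    have hIval : ∀ m ∈ c.support,
        (∫ θ in (0:ℝ)..T, Complex.exp (Complex.I * (((zdot m ν - c0) * θ : ℝ) : ℂ)))
        = (Complex.exp (Complex.I * (((zdot m ν - c0) * T : ℝ) : ℂ)) - 1) /
            (Complex.I * ((zdot m ν - c0 : ℝ) : ℂ)) := by
      intro m hm
      have hcne : Complex.I * ((zdot m ν - c0 : ℝ) : ℂ) ≠ 0 :=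
        mul_ne_zero Complex.I_ne_zero (by exact_mod_cast hlam m hm)
      have heq : ∀ θ : ℝ, Complex.exp (Complex.I * (((zdot m ν - c0) * θ : ℝ) : ℂ))
          = Complex.exp ((Complex.I * ((zdot m ν - c0 : ℝ) : ℂ)) * (θ : ℂ)) := by
        intro θ; congr 1; push_cast; ring
      rw [intervalIntegral.integral_congr
        (g := fun θ : ℝ => Complex.exp ((Complex.I * ((zdot m ν - c0 : ℝ) : ℂ)) * (θ : ℂ)))
        fun θ _ => heq θ]
      rw [integral_exp_mul_complex hcne]
      simp only [Complex.ofReal_zero, mul_zero, Complex.exp_zero]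
      rw [← heq T]
    have hI : (∫ θ in (0:ℝ)..T, ((1 : ℂ) - ∑ m ∈ c.support,
          c m * Complex.exp (Complex.I * (((zdot m ν - c0) * θ : ℝ) : ℂ))))
        = (T : ℂ) - ∑ m ∈ c.support,
            c m * ((Complex.exp (Complex.I * (((zdot m ν - c0) * T : ℝ) : ℂ)) - 1) /
              (Complex.I * ((zdot m ν - c0 : ℝ) : ℂ))) := by
      rw [intervalIntegral.integral_sub (g := fun θ : ℝ => ∑ m ∈ c.support,
          c m * Complex.exp (Complex.I * (((zdot m ν - c0) * θ : ℝ) : ℂ))) intervalIntegrable_const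
        ((continuous_finset_sum _ fun m _ => continuous_const.mul (hcont m)).intervalIntegrable _ _)]
      rw [intervalIntegral.integral_const]
      rw [intervalIntegral.integral_finset_sum (f := fun m (θ : ℝ) =>
          c m * Complex.exp (Complex.I * (((zdot m ν - c0) * θ : ℝ) : ℂ)))
        (fun m _ => (continuous_const.mul (hcont m)).intervalIntegrable _ _)]
      congr 1
      · simp
      · exact Finset.sum_congr rfl fun m hm => by
          rw [intervalIntegral.integral_const_mul, hIval m hm]
    have hnormInt : ‖∫ θ in (0:ℝ)..T, ((1 : ℂ) - ∑ m ∈ c.support,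
          c m * Complex.exp (Complex.I * (((zdot m ν - c0) * θ : ℝ) : ℂ)))‖ ≤ 1 / 2 * |T - 0| :=
      intervalIntegral.norm_integral_le_of_norm_le_const fun θ _ => hpt2 θ
    have hnormS : ‖∑ m ∈ c.support,
          c m * ((Complex.exp (Complex.I * (((zdot m ν - c0) * T : ℝ) : ℂ)) - 1) /
            (Complex.I * ((zdot m ν - c0 : ℝ) : ℂ)))‖ ≤ C := by
      refine (norm_sum_le _ _).trans ?_
      rw [hCdef]
      refine Finset.sum_le_sum fun m hm => ?_
      rw [norm_mul, norm_div]
      have h1 : ‖Complex.exp (Complex.I * (((zdot m ν - c0) * T : ℝ) : ℂ)) - 1‖ ≤ 2 := by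
        refine (norm_sub_le _ _).trans ?_
        rw [norm_eI, norm_one]; norm_num
      have h2 : ‖Complex.I * ((zdot m ν - c0 : ℝ) : ℂ)‖ = |zdot m ν - c0| := by
        rw [norm_mul, Complex.norm_I, one_mul, Complex.norm_real, Real.norm_eq_abs]
      rw [h2]
      have hpos : 0 < |zdot m ν - c0| := abs_pos.mpr (hlam m hm)
      gcongr
    have hTle : T ≤ 1 / 2 * |T - 0| + C := by
      have hsplit : ((T : ℝ) : ℂ) = (∫ θ in (0:ℝ)..T, ((1 : ℂ) - ∑ m ∈ c.support,
            c m * Complex.exp (Complex.I * (((zdot m ν - c0) * θ : ℝ) : ℂ))))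
          + ∑ m ∈ c.support,
            c m * ((Complex.exp (Complex.I * (((zdot m ν - c0) * T : ℝ) : ℂ)) - 1) /
              (Complex.I * ((zdot m ν - c0 : ℝ) : ℂ))) := by
        rw [hI]; ring
      calc T = ‖((T : ℝ) : ℂ)‖ := by
            rw [Complex.norm_real, Real.norm_eq_abs, abs_of_pos hT0]
        _ ≤ _ + _ := by rw [hsplit]; exact norm_add_le _ _
        _ ≤ 1 / 2 * |T - 0| + C := add_le_add hnormInt hnormS
    rw [sub_zero, abs_of_pos hT0] at hTle
    linarith
  refine ⟨hex, fun hnr => ?_⟩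
  obtain ⟨n, hn⟩ := hex
  refine ⟨n, hn, fun n' hn' => ?_⟩
  have hz : zdot (n' - n) ν = 0 := by
    rw [zdot_sub, ← hn, ← hn']
    ring
  have := hnr _ hz
  rwa [sub_eq_zero] at this
end
end

section
/- In the spin-orbit setting, let 𝒱 : ℝ × ℝ^d → SO(3) be a C¹ map whose third column 𝔳³ satisfies 𝒟𝔳³ = 𝒜𝔳³, and set C_𝒱 := −(1/2) Tr[𝒥(𝒱ᵀ𝒜𝒱 − 𝒱ᵀ𝒟𝒱)]. Then for every φ₀ ∈ ℝ^d and every θ ∈ ℝ, the principal solution matrix satisfies Φ(θ;φ₀) = 𝒱(θ, ωθ+φ₀) · exp(𝒥 ∫₀^θ C_𝒱(θ', ωθ'+φ₀) dθ') · 𝒱(0, φ₀)ᵀ. -/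
open MeasureTheory Filter
noncomputable section

section SpinOrbitAuxiliary

open Matrix

attribute [local instance] Matrix.linftyOpNormedAddCommGroup Matrix.linftyOpNormedSpace
  Matrix.linftyOpSemiNormedRing Matrix.linftyOpNormedRing Matrix.linftyOpNormedAlgebra

lemma matrix_hasDerivAt_iff {f : ℝ → Matrix (Fin 3) (Fin 3) ℝ}
    {f' : Matrix (Fin 3) (Fin 3) ℝ} {x : ℝ} :
    HasDerivAt f f' x ↔ ∀ i j, HasDerivAt (fun t => f t i j) (f' i j) x := by
  let e : Matrix (Fin 3) (Fin 3) ℝ ≃L[ℝ] (Fin 3 → Fin 3 → ℝ) :=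
    ((Matrix.ofLinearEquiv ℝ).symm :
      Matrix (Fin 3) (Fin 3) ℝ ≃ₗ[ℝ] (Fin 3 → Fin 3 → ℝ)).toContinuousLinearEquiv
  constructor
  · intro h i j
    have h1 : HasDerivAt (fun t => e (f t)) (e f') x :=
      e.toContinuousLinearMap.hasFDerivAt.comp_hasDerivAt x h
    exact hasDerivAt_pi.mp (hasDerivAt_pi.mp h1 i) j
  · intro h
    have h1 : HasDerivAt (fun t => e (f t)) (e f') x :=
      hasDerivAt_pi.mpr fun i => hasDerivAt_pi.mpr fun j => h i j
    have h2 : HasDerivAt (fun t => e.symm (e (f t))) (e.symm (e f')) x :=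
      e.symm.toContinuousLinearMap.hasFDerivAt.comp_hasDerivAt x h1
    simpa using h2

lemma Jmat_entries : Jmat 0 0 = 0 ∧ Jmat 0 1 = -1 ∧ Jmat 0 2 = 0 ∧ Jmat 1 0 = 1 ∧
    Jmat 1 1 = 0 ∧ Jmat 1 2 = 0 ∧ Jmat 2 0 = 0 ∧ Jmat 2 1 = 0 ∧ Jmat 2 2 = 0 := by
  refine ⟨?_, ?_, ?_, ?_, ?_, ?_, ?_, ?_, ?_⟩ <;>
    simp [Jmat, Matrix.cons_val_zero, Matrix.cons_val_one, Matrix.cons_val_two,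
      Matrix.head_cons, Matrix.vecHead, Matrix.vecTail, Function.comp]

lemma Jmat_transpose : Jmatᵀ = -Jmat := by
  obtain ⟨h00, h01, h02, h10, h11, h12, h20, h21, h22⟩ := Jmat_entries
  rw [Matrix.eta_fin_three Jmatᵀ, Matrix.eta_fin_three (-Jmat)]
  simp only [Matrix.transpose_apply, Matrix.neg_apply, h00, h01, h02, h10, h11, h12,
    h20, h21, h22]
  norm_num

/-- The key linear-algebra step: a matrix `D` whose "error" `W = Vᵀ A V - Vᵀ D` is
skew-symmetric with vanishing third column must satisfy `D = A V - c • (V * Jmat)`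
where `c` is extracted by the trace formula. -/
lemma skew_col_eq (V A D : Matrix (Fin 3) (Fin 3) ℝ) (c : ℝ)
    (hVTV : Vᵀ * V = 1)
    (hAskew : Aᵀ = -A)
    (hsym : Dᵀ * V + Vᵀ * D = 0)
    (hD2 : ∀ k, D k 2 = (A * V) k 2)
    (hc : c = -(1/2) * (Jmat * (Vᵀ * A * V - Vᵀ * D)).trace) :
    D = A * V - c • (V * Jmat) := by
  have hVVT : V * Vᵀ = 1 := mul_eq_one_comm.mp hVTV
  set W : Matrix (Fin 3) (Fin 3) ℝ := Vᵀ * A * V - Vᵀ * D with hWdef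
  have hDT : Dᵀ * V = -(Vᵀ * D) := eq_neg_of_add_eq_zero_left hsym
  have hWT : Wᵀ = -W := by
    rw [hWdef, Matrix.transpose_sub, Matrix.transpose_mul, Matrix.transpose_mul,
      Matrix.transpose_mul, Matrix.transpose_transpose, hAskew, hDT]
    noncomm_ring
  have hskew : ∀ i j, W j i = -W i j := by
    intro i j
    have := congrFun (congrFun hWT i) j
    simpa [Matrix.transpose_apply, Matrix.neg_apply] using this
  have hdiag : ∀ i, W i i = 0 := by
    intro i
    have := hskew i i
    linarith
  have hcol : ∀ i, W i 2 = 0 := by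
    intro i
    have h1 : W i 2 = ∑ k, Vᵀ i k * (A * V) k 2 - ∑ k, Vᵀ i k * D k 2 := by
      rw [hWdef, Matrix.sub_apply, Matrix.mul_assoc, Matrix.mul_apply, Matrix.mul_apply]
    rw [h1, sub_eq_zero]
    exact Finset.sum_congr rfl fun k _ => by rw [hD2 k]
  have hc10 : c = W 1 0 := by
    obtain ⟨h00, h01, h02, h10, h11, h12, h20, h21, h22⟩ := Jmat_entries
    have htr : (Jmat * W).trace = W 0 1 - W 1 0 := by
      simp only [Matrix.trace, Matrix.diag, Matrix.mul_apply, Fin.sum_univ_three,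
        h00, h01, h02, h10, h11, h12, h20, h21, h22]
      ring
    rw [hc, htr, hskew 1 0]
    ring
  have hW01 : W 0 1 = -W 1 0 := hskew 1 0
  have hW20 : W 2 0 = 0 := by rw [hskew 0 2, hcol 0, neg_zero]
  have hW21 : W 2 1 = 0 := by rw [hskew 1 2, hcol 1, neg_zero]
  have hWJ : W = c • Jmat := by
    obtain ⟨h00, h01, h02, h10, h11, h12, h20, h21, h22⟩ := Jmat_entries
    rw [Matrix.eta_fin_three W, Matrix.eta_fin_three (c • Jmat)]
    simp only [Matrix.smul_apply, h00, h01, h02, h10, h11, h12, h20, h21, h22,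
      smul_eq_mul, mul_zero, mul_one, mul_neg, hdiag 0, hdiag 1, hdiag 2, hW01,
      hcol 0, hcol 1, hW20, hW21, ← hc10]
  have hmul : V * W = c • (V * Jmat) := by rw [hWJ, Matrix.mul_smul]
  have hexp : V * W = A * V - D := by
    rw [hWdef, Matrix.mul_sub, ← Matrix.mul_assoc, ← Matrix.mul_assoc, hVVT, Matrix.one_mul,
      ← Matrix.mul_assoc, hVVT, Matrix.one_mul]
  rw [hexp] at hmul
  rw [← hmul]
  abel

end SpinOrbitAuxiliary

/-- Theorem 6.1. -/
theorem principal_solution_from_frame_field {d : ℕ} (hd : 1 ≤ d) (ω : Fin d → ℝ)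
    (𝒜 : Pt d → Matrix (Fin 3) (Fin 3) ℝ)
    (h𝒜s : SmoothMat 1 𝒜) (h𝒜skew : ∀ p, (𝒜 p).transpose = -(𝒜 p))
    (h𝒜per : PeriodicPt 𝒜)
    (𝒱 : Pt d → Matrix (Fin 3) (Fin 3) ℝ)
    (h𝒱s : SmoothMat 1 𝒱) (h𝒱SO3 : ∀ p, 𝒱 p ∈ SO3)
    (h𝒱col3 : ∀ (p : Pt d) (i : Fin 3),
      fderiv ℝ (fun q => 𝒱 q i 2) p (1, ω) = ((𝒜 p).mulVec fun j => 𝒱 p j 2) i)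
    (C : Pt d → ℝ)
    (hC : ∀ p, C p = -(1/2) *
      (Jmat * ((𝒱 p).transpose * 𝒜 p * 𝒱 p - (𝒱 p).transpose * Dmat ω 𝒱 p)).trace)
    (φ₀ : Fin d → ℝ) (Φ : ℝ → Matrix (Fin 3) (Fin 3) ℝ)
    (hΦ : IsPrincipalSolution ω 𝒜 φ₀ Φ) :
    ∀ θ : ℝ, Φ θ = 𝒱 (θ, fun l => ω l * θ + φ₀ l) *
      NormedSpace.exp ((∫ t in (0:ℝ)..θ, C (t, fun l => ω l * t + φ₀ l)) • Jmat) *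
      (𝒱 (0, φ₀)).transpose := by
  intro θ
  open Matrix in
  -- the moving point and its derivative
  have hline : ∀ t : ℝ, HasDerivAt (fun s : ℝ => ((s, fun l => ω l * s + φ₀ l) : Pt d))
      ((1 : ℝ), ω) t := by
    intro t
    refine HasDerivAt.prodMk (hasDerivAt_id t) (hasDerivAt_pi.mpr fun l => ?_)
    simpa using ((hasDerivAt_id t).const_mul (ω l)).add_const (φ₀ l)
  have hlinecont : Continuous fun s : ℝ => ((s, fun l => ω l * s + φ₀ l) : Pt d) :=
    continuous_id.prodMk (continuous_pi fun l =>
      (continuous_const.mul continuous_id).add continuous_const)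
  -- differentiated orthonormality
  have hsym : ∀ q : Pt d, (Dmat ω 𝒱 q)ᵀ * 𝒱 q + (𝒱 q)ᵀ * Dmat ω 𝒱 q = 0 := by
    intro q
    ext i j
    have hdiff : ∀ a b : Fin 3, DifferentiableAt ℝ (fun r => 𝒱 r a b) q :=
      fun a b => ((h𝒱s a b).differentiable (by simp)).differentiableAt
    have hg : HasFDerivAt (fun r : Pt d => ∑ k, 𝒱 r k i * 𝒱 r k j)
        (∑ k, (𝒱 q k i • fderiv ℝ (fun r => 𝒱 r k j) q +
          𝒱 q k j • fderiv ℝ (fun r => 𝒱 r k i) q)) q := by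
      refine HasFDerivAt.fun_sum fun k _ => ?_
      exact (hdiff k i).hasFDerivAt.mul (hdiff k j).hasFDerivAt
    have hconstf : (fun r : Pt d => ∑ k, 𝒱 r k i * 𝒱 r k j) =
        fun _ => (1 : Matrix (Fin 3) (Fin 3) ℝ) i j := by
      funext r
      calc ∑ k, 𝒱 r k i * 𝒱 r k j = ((𝒱 r)ᵀ * 𝒱 r) i j := by
            simp [Matrix.mul_apply, Matrix.transpose_apply]
        _ = (1 : Matrix (Fin 3) (Fin 3) ℝ) i j := by rw [(h𝒱SO3 r).1]
    have hzero : HasFDerivAt (fun r : Pt d => ∑ k, 𝒱 r k i * 𝒱 r k j)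
        (0 : Pt d →L[ℝ] ℝ) q := by
      rw [hconstf]; exact hasFDerivAt_const _ _
    have hEq : (∑ k, (𝒱 q k i • fderiv ℝ (fun r => 𝒱 r k j) q +
        𝒱 q k j • fderiv ℝ (fun r => 𝒱 r k i) q)) = 0 := hg.unique hzero
    have hEq2 := congrArg (fun L : Pt d →L[ℝ] ℝ => L ((1 : ℝ), ω)) hEq
    simp only [ContinuousLinearMap.coe_sum', Finset.sum_apply, ContinuousLinearMap.add_apply,
      ContinuousLinearMap.coe_smul', Pi.smul_apply, ContinuousLinearMap.zero_apply,
      smul_eq_mul] at hEq2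
    simp only [Matrix.add_apply, Matrix.mul_apply, Matrix.transpose_apply, Matrix.zero_apply,
      Dmat, Matrix.of_apply]
    rw [← Finset.sum_add_distrib, ← hEq2]
    exact Finset.sum_congr rfl fun k _ => by ring
  -- third column
  have hD2 : ∀ (q : Pt d) (k : Fin 3), Dmat ω 𝒱 q k 2 = (𝒜 q * 𝒱 q) k 2 := by
    intro q k
    show fderiv ℝ (fun r => 𝒱 r k 2) q (1, ω) = _
    rw [h𝒱col3 q k]
    simp [Matrix.mulVec, Matrix.mul_apply, dotProduct]
  -- the key identity 𝒟𝒱 = 𝒜𝒱 - C 𝒱𝒥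
  have key : ∀ q : Pt d, Dmat ω 𝒱 q = 𝒜 q * 𝒱 q - C q • (𝒱 q * Jmat) :=
    fun q => skew_col_eq (𝒱 q) (𝒜 q) (Dmat ω 𝒱 q) (C q) (h𝒱SO3 q).1 (h𝒜skew q)
      (hsym q) (hD2 q) (hC q)
  -- continuity of C along the line
  have hDcont : ∀ i j : Fin 3, Continuous fun q : Pt d => Dmat ω 𝒱 q i j := by
    intro i j
    have h1 : Continuous fun q : Pt d => fderiv ℝ (fun r => 𝒱 r i j) q :=
      (h𝒱s i j).continuous_fderiv (by simp)
    exact h1.clm_apply continuous_const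
  have hCcont : Continuous C := by
    have h2 : C = fun q => -(1/2) *
        (Jmat * ((𝒱 q)ᵀ * 𝒜 q * 𝒱 q - (𝒱 q)ᵀ * Dmat ω 𝒱 q)).trace := funext hC
    rw [h2]
    have hV : Continuous fun q : Pt d => 𝒱 q :=
      continuous_pi fun i => continuous_pi fun j => (h𝒱s i j).continuous
    have hA : Continuous fun q : Pt d => 𝒜 q :=
      continuous_pi fun i => continuous_pi fun j => (h𝒜s i j).continuous
    have hD : Continuous fun q : Pt d => Dmat ω 𝒱 q :=
      continuous_pi fun i => continuous_pi fun j => hDcont i j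
    exact continuous_const.mul (Continuous.matrix_trace (Continuous.matrix_mul continuous_const
      (((hV.matrix_transpose.matrix_mul hA).matrix_mul hV).sub
        (hV.matrix_transpose.matrix_mul hD))))
  have hccont : Continuous fun t : ℝ => C (t, fun l => ω l * t + φ₀ l) :=
    hCcont.comp hlinecont
  have hIder : ∀ t : ℝ, HasDerivAt (fun s => ∫ u in (0:ℝ)..s, C (u, fun l => ω l * u + φ₀ l))
      (C (t, fun l => ω l * t + φ₀ l)) t :=
    fun t => (hccont.integral_hasStrictDerivAt 0 t).hasDerivAt
  -- now install the matrix norm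
  letI : NormedAddCommGroup (Matrix (Fin 3) (Fin 3) ℝ) := Matrix.linftyOpNormedAddCommGroup
  letI : NormedSpace ℝ (Matrix (Fin 3) (Fin 3) ℝ) := Matrix.linftyOpNormedSpace
  letI : SeminormedRing (Matrix (Fin 3) (Fin 3) ℝ) := Matrix.linftyOpSemiNormedRing
  letI : NormedRing (Matrix (Fin 3) (Fin 3) ℝ) := Matrix.linftyOpNormedRing
  letI : NormedAlgebra ℝ (Matrix (Fin 3) (Fin 3) ℝ) := Matrix.linftyOpNormedAlgebra
  -- matrix-valued derivatives along the line
  have hVent : ∀ (t : ℝ) (i j : Fin 3),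
      HasDerivAt (fun s => 𝒱 (s, fun l => ω l * s + φ₀ l) i j)
        (Dmat ω 𝒱 (t, fun l => ω l * t + φ₀ l) i j) t := by
    intro t i j
    have h := (((h𝒱s i j).differentiable (by simp)).differentiableAt
      (x := ((t, fun l => ω l * t + φ₀ l) : Pt d))).hasFDerivAt
    exact h.comp_hasDerivAt t (hline t)
  have hVmat : ∀ t : ℝ, HasDerivAt (fun s => 𝒱 (s, fun l => ω l * s + φ₀ l))
      (𝒜 (t, fun l => ω l * t + φ₀ l) * 𝒱 (t, fun l => ω l * t + φ₀ l) -
        C (t, fun l => ω l * t + φ₀ l) • (𝒱 (t, fun l => ω l * t + φ₀ l) * Jmat)) t := by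
    intro t
    rw [← key _]
    exact matrix_hasDerivAt_iff.mpr fun i j => hVent t i j
  have hVTmat : ∀ t : ℝ, HasDerivAt (fun s => (𝒱 (s, fun l => ω l * s + φ₀ l))ᵀ)
      ((𝒜 (t, fun l => ω l * t + φ₀ l) * 𝒱 (t, fun l => ω l * t + φ₀ l) -
        C (t, fun l => ω l * t + φ₀ l) • (𝒱 (t, fun l => ω l * t + φ₀ l) * Jmat))ᵀ) t := by
    intro t
    refine matrix_hasDerivAt_iff.mpr fun i j => ?_
    simpa [Matrix.transpose_apply] using matrix_hasDerivAt_iff.mp (hVmat t) j i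
  have hΦmat : ∀ t : ℝ, HasDerivAt Φ (𝒜 (t, fun l => ω l * t + φ₀ l) * Φ t) t :=
    fun t => matrix_hasDerivAt_iff.mpr fun i j => hΦ.2 t i j
  -- derivative of the (negative) exponential factor
  have hEneg : ∀ t : ℝ, HasDerivAt
      (fun s => NormedSpace.exp
        ((-(∫ u in (0:ℝ)..s, C (u, fun l => ω l * u + φ₀ l))) • Jmat))
      ((-(C (t, fun l => ω l * t + φ₀ l))) •
        (NormedSpace.exp
          ((-(∫ u in (0:ℝ)..t, C (u, fun l => ω l * u + φ₀ l))) • Jmat) * Jmat)) t := by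
    intro t
    have h1 := hasDerivAt_exp_smul_const (𝕂 := ℝ) (𝔸 := Matrix (Fin 3) (Fin 3) ℝ)
      Jmat (-(∫ u in (0:ℝ)..t, C (u, fun l => ω l * u + φ₀ l)))
    have h2 := (hIder t).neg
    convert HasDerivAt.scomp t h1 h2 using 1
    all_goals rfl
  -- the conjugated solution is constant
  have hΓder : ∀ t : ℝ, HasDerivAt
      (fun s => 𝒱 (0, φ₀) *
        NormedSpace.exp ((-(∫ u in (0:ℝ)..s, C (u, fun l => ω l * u + φ₀ l))) • Jmat) *
        (𝒱 (s, fun l => ω l * s + φ₀ l))ᵀ * Φ s) 0 t := by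
    intro t
    have h := (((hasDerivAt_const t (𝒱 (0, φ₀))).mul (hEneg t)).mul (hVTmat t)).mul (hΦmat t)
    convert h using 1
    case e'_4 | e'_5 | e'_6 | e'_8 => rfl
    rw [Matrix.transpose_sub, Matrix.transpose_smul, Matrix.transpose_mul,
      Matrix.transpose_mul, Jmat_transpose, h𝒜skew]
    simp only [Matrix.zero_mul, zero_add, Matrix.mul_neg, Matrix.neg_mul, Matrix.smul_mul,
      Matrix.mul_smul, smul_neg, neg_smul, Matrix.sub_mul, Matrix.mul_sub, Matrix.add_mul,
      Matrix.mul_add, Matrix.mul_assoc, sub_eq_add_neg, neg_neg, Pi.mul_apply]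
    abel
  have hconstfn := fun a b : ℝ => is_const_of_deriv_eq_zero
    (fun t => (hΓder t).differentiableAt) (fun t => (hΓder t).deriv) a b
  have hφ0 : (fun l => ω l * 0 + φ₀ l) = φ₀ := by funext l; ring
  have hkey : 𝒱 (0, φ₀) *
      NormedSpace.exp ((-(∫ u in (0:ℝ)..θ, C (u, fun l => ω l * u + φ₀ l))) • Jmat) *
      (𝒱 (θ, fun l => ω l * θ + φ₀ l))ᵀ * Φ θ = 1 := by
    have h0 : 𝒱 (0, φ₀) *
        NormedSpace.exp ((-(∫ u in (0:ℝ)..θ, C (u, fun l => ω l * u + φ₀ l))) • Jmat) *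
        (𝒱 (θ, fun l => ω l * θ + φ₀ l))ᵀ * Φ θ =
        𝒱 (0, φ₀) *
        NormedSpace.exp ((-(∫ u in (0:ℝ)..(0:ℝ), C (u, fun l => ω l * u + φ₀ l))) • Jmat) *
        (𝒱 (0, fun l => ω l * 0 + φ₀ l))ᵀ * Φ 0 := hconstfn θ 0
    rw [h0, intervalIntegral.integral_same, hΦ.1, hφ0]
    simp only [neg_zero, zero_smul, NormedSpace.exp_zero, Matrix.mul_one]
    exact mul_eq_one_comm.mp (h𝒱SO3 (0, φ₀)).1
  -- the two exponential factors are inverse to each other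
  have hEE : NormedSpace.exp ((∫ u in (0:ℝ)..θ, C (u, fun l => ω l * u + φ₀ l)) • Jmat) *
      NormedSpace.exp ((-(∫ u in (0:ℝ)..θ, C (u, fun l => ω l * u + φ₀ l))) • Jmat) = 1 := by
    rw [← Matrix.exp_add_of_commute _ _ (((Commute.refl Jmat).smul_left _).smul_right _),
      ← add_smul]
    simp [NormedSpace.exp_zero]
  -- conclude
  have hVT1 : 𝒱 (θ, fun l => ω l * θ + φ₀ l) * (𝒱 (θ, fun l => ω l * θ + φ₀ l))ᵀ = 1 :=
    mul_eq_one_comm.mp (h𝒱SO3 _).1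
  have hV01 : (𝒱 (0, φ₀))ᵀ * 𝒱 (0, φ₀) = 1 := (h𝒱SO3 _).1
  have hkey' : 𝒱 (0, φ₀) *
      (NormedSpace.exp ((-(∫ u in (0:ℝ)..θ, C (u, fun l => ω l * u + φ₀ l))) • Jmat) *
        ((𝒱 (θ, fun l => ω l * θ + φ₀ l))ᵀ * Φ θ)) = 1 := by
    rw [← Matrix.mul_assoc, ← Matrix.mul_assoc]; exact hkey
  set Vθ := 𝒱 (θ, fun l => ω l * θ + φ₀ l) with hVθ
  set V0 := 𝒱 (0, φ₀) with hV0
  set E1 := NormedSpace.exp ((∫ u in (0:ℝ)..θ, C (u, fun l => ω l * u + φ₀ l)) • Jmat)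
    with hE1
  set E2 := NormedSpace.exp ((-(∫ u in (0:ℝ)..θ, C (u, fun l => ω l * u + φ₀ l))) • Jmat)
    with hE2
  calc Φ θ = 1 * Φ θ := (Matrix.one_mul _).symm
    _ = Vθ * (Vθᵀ * Φ θ) := by rw [← hVT1, Matrix.mul_assoc]
    _ = Vθ * (E1 * (E2 * (Vθᵀ * Φ θ))) := by rw [← Matrix.mul_assoc E1, hEE, Matrix.one_mul]
    _ = Vθ * (E1 * ((V0ᵀ * V0) * (E2 * (Vθᵀ * Φ θ)))) := by rw [hV01, Matrix.one_mul]
    _ = Vθ * (E1 * (V0ᵀ * (V0 * (E2 * (Vθᵀ * Φ θ))))) := by rw [Matrix.mul_assoc]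
    _ = Vθ * (E1 * (V0ᵀ * 1)) := by rw [hkey']
    _ = Vθ * E1 * V0ᵀ := by rw [Matrix.mul_one, ← Matrix.mul_assoc]
end
end
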